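/- arXiv:math/0612037 — 7 statements merged into one kernel-verified Lean document; each statement's English description precedes it below -/
import Mathlib

section
/- Let R be a local artinian principal ideal ring such that the residue division ring R/J(R) has characteristic p > 0, and let G be a nontrivial finite p-group (a finite group whose order is a power of p). If the group ring RG is a principal ideal ring, then R is a division ring. -/
open Function

universe u v

/-- A (not necessarily commutative) ring in which every left ideal and every
right ideal is principal.  Right ideals of `R` are identified with left ideals
of the opposite ring `Rᵐᵒᵖ`. -/
def IsPrincipalIdealRingNC (R : Type*) [Ring R] : Prop :=
  (∀ I : Ideal R, I.IsPrincipal) ∧ (∀ I : Ideal Rᵐᵒᵖ, I.IsPrincipal)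

/-- A left and right artinian principal ideal ring. -/
def IsArtinianPIR (R : Type*) [Ring R] : Prop :=
  IsArtinianRing R ∧ IsArtinianRing Rᵐᵒᵖ ∧ IsPrincipalIdealRingNC R

/-- The Jacobson radical of a (possibly noncommutative) ring: the intersection
of all maximal left ideals. -/
def jacobsonRad (R : Type*) [Ring R] : Ideal R :=
  Ideal.jacobson (⊥ : Ideal R)

/-- The square `J(R)²` of the Jacobson radical, as the (left) ideal generated by
all products of two elements of `J(R)`; since `J(R)` is two-sided this is the
usual two-sided ideal `J(R)²`. -/
def jacobsonRadSq (R : Type*) [Ring R] : Ideal R :=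
  Ideal.span {x : R | ∃ a ∈ jacobsonRad R, ∃ b ∈ jacobsonRad R, x = a * b}

/-- `a` is a left morphic element: there is `b` with `Ra = ann_ℓ(b)` and `Rb = ann_ℓ(a)`. -/
def IsLeftMorphicElem {R : Type*} [Ring R] (a : R) : Prop :=
  ∃ b : R, (∀ x : R, x * b = 0 ↔ ∃ r : R, x = r * a) ∧
    (∀ x : R, x * a = 0 ↔ ∃ r : R, x = r * b)

/-- A left morphic ring: every element is left morphic. -/
def IsLeftMorphicRing (R : Type*) [Ring R] : Prop :=
  ∀ a : R, IsLeftMorphicElem a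

/-- `a` is a right morphic element: there is `b` with `aR = ann_r(b)` and `bR = ann_r(a)`. -/
def IsRightMorphicElem {R : Type*} [Ring R] (a : R) : Prop :=
  ∃ b : R, (∀ x : R, b * x = 0 ↔ ∃ r : R, x = a * r) ∧
    (∀ x : R, a * x = 0 ↔ ∃ r : R, x = b * r)

/-- A right morphic ring: every element is right morphic. -/
def IsRightMorphicRing (R : Type*) [Ring R] : Prop :=
  ∀ a : R, IsRightMorphicElem a

/-- A local, left and right artinian, principal ideal ring. -/
def IsLocalArtinianPIR (S : Type*) [Ring S] : Prop :=
  IsLocalRing S ∧ IsArtinianRing S ∧ IsArtinianRing Sᵐᵒᵖ ∧ IsPrincipalIdealRingNC S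

/-- `R` is a division ring: it is nontrivial and every nonzero element is a unit. -/
def IsDivisionRingNC (R : Type*) [Ring R] : Prop :=
  Nontrivial R ∧ ∀ x : R, x ≠ 0 → IsUnit x

/-- The residue ring `R/J(R)` (realized by any surjection with kernel `J(R)`)
has characteristic `p`. -/
def ResidueCharP (R : Type u) [Ring R] (p : ℕ) : Prop :=
  ∀ (D : Type u) [DivisionRing D] (f : R →+* D), Function.Surjective f →
    RingHom.ker f = jacobsonRad R → CharP D p

/-- `G` is `R`-admissible: every central idempotent of `(R/J)G` is the
coefficientwise image of a central idempotent of `RG`, where `R/J` is realized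
by any surjective ring homomorphism with kernel `J(R)`. -/
def IsAdmissible (R : Type u) [Ring R] (G : Type v) [Group G] : Prop :=
  ∀ (D : Type u) [Ring D] (f : R →+* D), Function.Surjective f →
    RingHom.ker f = jacobsonRad R →
    ∀ e : MonoidAlgebra D G, IsIdempotentElem e →
      (∀ y : MonoidAlgebra D G, e * y = y * e) →
      ∃ e' : MonoidAlgebra R G, IsIdempotentElem e' ∧
        (∀ y : MonoidAlgebra R G, e' * y = y * e') ∧
        ∀ g : G, f (e'.coeff g) = e.coeff g

/-- `G` is finite-by-infinite cyclic: there is a finite normal subgroup `N ⊴ G`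
(the kernel of the homomorphism below) with `G/N` infinite cyclic. -/
def IsFiniteByInfiniteCyclic (G : Type*) [Group G] : Prop :=
  ∃ φ : G →* Multiplicative ℤ, Function.Surjective φ ∧ Finite φ.ker

/-- `G` is finite `p'`-by-cyclic `p`: there is a finite normal subgroup `N ⊴ G`
(the kernel below) of order prime to `p` with `G/N` a cyclic `p`-group. -/
def IsFinitePrimeToPByCyclicP (p : ℕ) (G : Type*) [Group G] : Prop :=
  ∃ (r : ℕ) (φ : G →* Multiplicative (ZMod (p ^ r))),
    Function.Surjective φ ∧ Finite φ.ker ∧ ¬ p ∣ Nat.card φ.ker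

/-- `G` is finite `p'`-by-infinite cyclic: there is a finite normal subgroup
`N ⊴ G` (the kernel below) of order prime to `p` with `G/N` infinite cyclic. -/
def IsFinitePrimeToPByInfiniteCyclic (p : ℕ) (G : Type*) [Group G] : Prop :=
  ∃ φ : G →* Multiplicative ℤ, Function.Surjective φ ∧ Finite φ.ker ∧
    ¬ p ∣ Nat.card φ.ker

/-- `G` is finite `π'`-by-cyclic `π`: there is a finite normal subgroup `N ⊴ G`
(the kernel below) whose order is divisible by no prime of `π`, with `G/N` a
finite cyclic group all of whose order's prime divisors lie in `π`. -/
def IsFinitePrimeToPiByCyclicPi (π : Set ℕ) (G : Type*) [Group G] : Prop :=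
  ∃ (n : ℕ) (φ : G →* Multiplicative (ZMod n)), 0 < n ∧
    (∀ q : ℕ, q.Prime → q ∣ n → q ∈ π) ∧
    Function.Surjective φ ∧ Finite φ.ker ∧ ∀ q ∈ π, ¬ q ∣ Nat.card φ.ker

/-- `G` is finite `π'`-by-infinite cyclic: there is a finite normal subgroup
`N ⊴ G` (the kernel below) whose order is divisible by no prime of `π`, with
`G/N` infinite cyclic. -/
def IsFinitePrimeToPiByInfiniteCyclic (π : Set ℕ) (G : Type*) [Group G] : Prop :=
  ∃ φ : G →* Multiplicative ℤ, Function.Surjective φ ∧ Finite φ.ker ∧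
    ∀ q ∈ π, ¬ q ∣ Nat.card φ.ker


section LocalAux
variable {R : Type u} [Ring R] [IsLocalRing R]

theorem auxUnitLeft {a b : R} (h : b * a = 1) : IsUnit a := by
  rcases IsLocalRing.isUnit_or_isUnit_of_add_one (a := a * b) (b := 1 - a * b) (by abel) with hu | hu
  · obtain ⟨u, hu⟩ := hu
    have h1 : a * (b * ↑u⁻¹) = 1 := by rw [← mul_assoc, ← hu, Units.mul_inv]
    have h2 : b * (a * (b * ↑u⁻¹)) = b * 1 := by rw [h1]
    rw [← mul_assoc, h, one_mul, mul_one] at h2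
    exact ⟨⟨a, b, by rw [← h2, h1], h⟩, rfl⟩
  · exfalso
    obtain ⟨u, hu⟩ := hu
    have h0 : (↑u : R) * a = 0 := by
      rw [hu, sub_mul, one_mul, mul_assoc, h, mul_one, sub_self]
    have ha : a = 0 := by
      calc a = ↑u⁻¹ * (↑u * a) := by rw [← mul_assoc, Units.inv_mul, one_mul]
        _ = 0 := by rw [h0, mul_zero]
    rw [ha, mul_zero] at h
    exact zero_ne_one h

theorem auxUnitRight {a b : R} (h : a * b = 1) : IsUnit a := by
  rcases IsLocalRing.isUnit_or_isUnit_of_add_one (a := b * a) (b := 1 - b * a) (by abel) with hu | hu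
  · obtain ⟨u, hu⟩ := hu
    have h1 : (↑u⁻¹ * b) * a = 1 := by rw [mul_assoc, ← hu, Units.inv_mul]
    have h2 : ((↑u⁻¹ * b) * (a * b) : R) = ↑u⁻¹ * b * 1 := by rw [h]
    rw [← mul_assoc, h1, one_mul, mul_one] at h2
    exact ⟨⟨a, b, h, by rw [h2, h1]⟩, rfl⟩
  · exfalso
    obtain ⟨u, hu⟩ := hu
    have h0 : a * ↑u = 0 := by
      rw [hu, mul_sub, mul_one, ← mul_assoc, h, one_mul, sub_self]
    have ha : a = 0 := by
      calc a = (a * ↑u) * ↑u⁻¹ := by rw [mul_assoc, Units.mul_inv, mul_one]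
        _ = 0 := by rw [h0, zero_mul]
    rw [ha, zero_mul] at h
    exact zero_ne_one h

theorem auxNonunitMulLeft {x : R} (r : R) (hx : ¬IsUnit x) : ¬IsUnit (r * x) := by
  rintro ⟨u, hu⟩
  exact hx (auxUnitLeft (b := ↑u⁻¹ * r) (by rw [mul_assoc, ← hu, Units.inv_mul]))

theorem auxNonunitMulRight {x : R} (r : R) (hx : ¬IsUnit x) : ¬IsUnit (x * r) := by
  rintro ⟨u, hu⟩
  exact hx (auxUnitRight (b := r * ↑u⁻¹) (by rw [← mul_assoc, ← hu, Units.mul_inv]))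

theorem auxNonunitAdd {x y : R} (hx : ¬IsUnit x) (hy : ¬IsUnit y) : ¬IsUnit (x + y) := by
  rintro ⟨u, hu⟩
  have h1 : (↑u⁻¹ * x) + (↑u⁻¹ * y) = 1 := by rw [← mul_add, ← hu, Units.inv_mul]
  rcases IsLocalRing.isUnit_or_isUnit_of_add_one h1 with h | h
  · exact hx (by simpa [← mul_assoc, Units.mul_inv, one_mul] using (u.isUnit.mul h :
      IsUnit (↑u * (↑u⁻¹ * x))))
  · exact hy (by simpa [← mul_assoc, Units.mul_inv, one_mul] using (u.isUnit.mul h :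
      IsUnit (↑u * (↑u⁻¹ * y))))

variable (R)

/-- The set of nonunits of a (possibly noncommutative) local ring, as a left ideal. -/
def nonunitsNC : Ideal R where
  carrier := {x | ¬IsUnit x}
  zero_mem' := not_isUnit_zero
  add_mem' := auxNonunitAdd
  smul_mem' := fun c _ hx => auxNonunitMulLeft c hx

variable {R}

theorem mem_nonunitsNC {x : R} : x ∈ nonunitsNC R ↔ ¬IsUnit x := Iff.rfl

theorem nonunitsNC_isMaximal : (nonunitsNC R).IsMaximal := by
  constructor; constructor
  · intro htop
    have h1 : (1 : R) ∈ nonunitsNC R := htop ▸ Submodule.mem_top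
    exact h1 isUnit_one
  · intro J hJ
    obtain ⟨x, hxJ, hx⟩ := SetLike.exists_of_lt hJ
    exact J.eq_top_of_isUnit_mem hxJ (not_not.mp hx)

theorem jacobsonRad_eq_nonunitsNC : jacobsonRad R = nonunitsNC R := by
  apply le_antisymm
  · exact sInf_le ⟨bot_le, nonunitsNC_isMaximal⟩
  · apply le_sInf
    rintro J ⟨-, hJ⟩
    have hle : J ≤ nonunitsNC R := fun x hx hu => hJ.ne_top (J.eq_top_of_isUnit_mem hx hu)
    rcases lt_or_eq_of_le hle with hlt | he
    · exact absurd (hJ.out.2 _ hlt) (fun htop => (mem_nonunitsNC.mp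
        (htop ▸ Submodule.mem_top : (1 : R) ∈ nonunitsNC R)) isUnit_one)
    · exact he.ge

theorem mem_jacobsonRad {x : R} : x ∈ jacobsonRad R ↔ ¬IsUnit x := by
  rw [jacobsonRad_eq_nonunitsNC]; rfl

end LocalAux

theorem auxGroupHom (p : ℕ) (hp : p.Prime) (G : Type v) [Group G] [Finite G]
    [Nontrivial G] (r : ℕ) (hr : Nat.card G = p ^ r) :
    ∃ c : G →* Multiplicative (ZMod p), ∃ g₀ : G, (c g₀).toAdd ≠ 0 := by
  classical
  haveI : Fact p.Prime := ⟨hp⟩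
  haveI hPG : IsPGroup p G := IsPGroup.of_card hr
  haveI : Group.IsNilpotent G := hPG.isNilpotent
  have hcomm_ne : commutator G ≠ ⊤ := by
    intro htop
    have hall : ∀ n, (⊤ : Subgroup G).lowerCentralSeries n = ⊤ := by
      intro n
      induction n with
      | zero => exact Subgroup.lowerCentralSeries_zero _
      | succ n ih =>
        rw [Subgroup.lowerCentralSeries_succ, ih]
        exact htop
    obtain ⟨n, hn⟩ := (nilpotent_iff_lowerCentralSeries (G := G)).mp inferInstance
    obtain ⟨x, hx⟩ := exists_ne (1 : G)
    exact hx (Subgroup.mem_bot.mp (by rw [← hn, hall n]; exact Subgroup.mem_top x))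
  set A := Abelianization G
  obtain ⟨x₀, hx₀⟩ : ∃ x : G, x ∉ commutator G := by
    by_contra h
    push_neg at h
    exact hcomm_ne (top_le_iff.mp (fun x _ => h x))
  have hA_nt : Nontrivial A := by
    refine ⟨Abelianization.of x₀, 1, ?_⟩
    intro h
    exact hx₀ ((QuotientGroup.eq_one_iff x₀).mp h)
  have hexp : ∀ a : A, a ^ (p ^ r) = 1 := by
    intro a
    induction a using QuotientGroup.induction_on with
    | _ g =>
      have hg : g ^ (p ^ r) = 1 := by rw [← hr]; exact pow_card_eq_one'
      show (Abelianization.of g) ^ (p ^ r) = 1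
      rw [← map_pow, hg, map_one]
  set H : Subgroup A := (powMonoidHom p : A →* A).range with hH
  haveI : H.Normal := Subgroup.normal_of_comm H
  set B := A ⧸ H with hB
  have hBpow : ∀ b : B, b ^ p = 1 := by
    intro b
    induction b using QuotientGroup.induction_on with
    | _ a =>
      rw [← QuotientGroup.mk_pow]
      rw [QuotientGroup.eq_one_iff]
      exact ⟨a, rfl⟩
  have hB_nt : Nontrivial B := by
    by_contra hns
    have hall : ∀ b : B, b = 1 := by
      intro b
      rcases subsingleton_or_nontrivial B with hs | hn
      · exact Subsingleton.elim b 1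
      · exact absurd hn hns
    have hsurj : ∀ a : A, ∃ b : A, b ^ p = a := by
      intro a
      have : (QuotientGroup.mk a : B) = 1 := hall _
      obtain ⟨b, hb⟩ := (QuotientGroup.eq_one_iff a).mp this
      exact ⟨b, hb⟩
    have hiter : ∀ k : ℕ, ∀ a : A, ∃ b : A, b ^ (p ^ k) = a := by
      intro k
      induction k with
      | zero => exact fun a => ⟨a, by rw [pow_zero, pow_one]⟩
      | succ k ih =>
        intro a
        obtain ⟨b, hb⟩ := hsurj a
        obtain ⟨d, hd⟩ := ih b
        exact ⟨d, by rw [pow_succ, pow_mul, hd, hb]⟩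
    obtain ⟨a1, a2, hne⟩ := hA_nt
    have h1 : ∀ a : A, a = 1 := by
      intro a
      obtain ⟨b, hb⟩ := hiter r a
      rw [← hb, hexp b]
    exact hne ((h1 a1).trans (h1 a2).symm)
  haveI : Module (ZMod p) (Additive B) := AddCommGroup.zmodModule (by
    intro x
    show p • x = 0
    rw [show x = Additive.ofMul x.toMul from rfl, ← ofMul_pow, hBpow, ofMul_one])
  haveI : Nontrivial (Additive B) := hB_nt
  obtain ⟨x₁, hx₁⟩ := exists_ne (0 : Additive B)
  obtain ⟨φ, hφ⟩ : ∃ φ : Additive B →ₗ[ZMod p] ZMod p, φ x₁ ≠ 0 := by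
    by_contra h
    push_neg at h
    exact hx₁ ((Module.forall_dual_apply_eq_zero_iff (ZMod p) x₁).mp h)
  set ψ₁ : G →* B := (QuotientGroup.mk' H).comp Abelianization.of with hψ₁
  set c : G →* Multiplicative (ZMod p) :=
    (AddMonoidHom.toMultiplicativeRight φ.toAddMonoidHom).comp ψ₁ with hc
  have hψsurj : Function.Surjective ψ₁ := by
    intro b
    induction b using QuotientGroup.induction_on with
    | _ a =>
      induction a using QuotientGroup.induction_on with
      | _ g => exact ⟨g, rfl⟩
  obtain ⟨g₀, hg₀⟩ := hψsurj x₁.toMul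
  refine ⟨c, g₀, ?_⟩
  have hcv : (c g₀).toAdd = φ (Additive.ofMul (ψ₁ g₀)) := rfl
  rw [hcv, hg₀]
  exact hφ

section MAAux
variable {R : Type u} [Ring R] {D : Type u} [Ring D] {G : Type v} [Group G]

/-- The augmentation map of a (possibly noncommutative) group ring. -/
noncomputable def auxEps (R : Type u) [Ring R] (G : Type v) [Group G] :
    MonoidAlgebra R G →+* R :=
  MonoidAlgebra.liftNCRingHom (RingHom.id R) 1 (fun _ _ => by simp)

lemma auxEps_single (g : G) (r : R) : auxEps R G (MonoidAlgebra.single g r) = r := by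
  simp [auxEps, MonoidAlgebra.liftNCRingHom, MonoidAlgebra.liftNC_single]

/-- The twisted "derivation" `x ↦ ∑ π (x g) * v g`. -/
noncomputable def auxDelta (π : R →+* D) (v : G → D) : MonoidAlgebra R G →+ D :=
  (Finsupp.liftAddHom (fun g => (AddMonoidHom.mulRight (v g)).comp π.toAddMonoidHom)).comp
    MonoidAlgebra.coeffAddEquiv.toAddMonoidHom

lemma auxDelta_single (π : R →+* D) (v : G → D) (g : G) (r : R) :
    auxDelta π v (MonoidAlgebra.single g r) = π r * v g := by
  exact Finsupp.liftAddHom_apply_single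
    (fun g => (AddMonoidHom.mulRight (v g)).comp π.toAddMonoidHom) g r

lemma auxDelta_mul (π : R →+* D) (v : G → D)
    (hadd : ∀ g h : G, v (g * h) = v g + v h)
    (hcomm : ∀ (d : D) (g : G), v g * d = d * v g)
    (x y : MonoidAlgebra R G) :
    auxDelta π v (x * y) =
      auxDelta π v x * π (auxEps R G y) + π (auxEps R G x) * auxDelta π v y := by
  induction x using MonoidAlgebra.induction_linear with
  | zero => simp
  | add f g ihf ihg =>
    simp only [add_mul, map_add, ihf, ihg]
    abel
  | single g r =>
    induction y using MonoidAlgebra.induction_linear with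
    | zero => simp
    | add f₁ f₂ ih1 ih2 =>
      simp only [mul_add, map_add, ih1, ih2]
      abel
    | single h s =>
      rw [MonoidAlgebra.single_mul_single, auxDelta_single, auxDelta_single, auxDelta_single,
        auxEps_single, auxEps_single, hadd, map_mul, mul_add]
      congr 1
      · rw [mul_assoc, mul_assoc, hcomm]
      · rw [mul_assoc]

end MAAux

/-- If `R` is a local artinian principal ideal ring whose residue division ring
has characteristic `p > 0`, `G` is a nontrivial finite `p`-group, and the group
ring `RG` is a principal ideal ring, then `R` is a division ring. -/
theorem divisionRing_of_groupRing_pGroup_PIR (R : Type u) [Ring R]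
    (hloc : IsLocalRing R) (hart : IsArtinianRing R) (hartop : IsArtinianRing Rᵐᵒᵖ)
    (hpir : IsPrincipalIdealRingNC R)
    (p : ℕ) (hp : p.Prime) (hchar : ResidueCharP R p)
    (G : Type v) [Group G] [Finite G] (hGnt : Nontrivial G)
    (hGp : ∃ r : ℕ, Nat.card G = p ^ r)
    (hRG : IsPrincipalIdealRingNC (MonoidAlgebra R G)) :
    IsDivisionRingNC R := by
  classical
  haveI := hloc
  haveI := hGnt
  by_cases htriv : ∀ x : R, ¬IsUnit x → x = 0
  · exact ⟨hloc.toNontrivial, fun x hx => by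
      by_contra h; exact hx (htriv x h)⟩
  push_neg at htriv
  obtain ⟨x, hxnu, hxne⟩ := htriv
  exfalso
  obtain ⟨r, hr⟩ := hGp
  -- a generator of the Jacobson radical
  obtain ⟨j, hjspan⟩ := (hpir.1 (jacobsonRad R)).principal
  have hjmem : j ∈ jacobsonRad R := hjspan ▸ Submodule.mem_span_singleton_self j
  have hxJ : x ∈ jacobsonRad R := mem_jacobsonRad.mpr hxnu
  have hjne : j ≠ 0 := by
    rintro rfl
    rw [hjspan, Submodule.span_zero_singleton] at hxJ
    exact hxne hxJ
  -- the generator is not in J²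
  have hjnsq : j ∉ jacobsonRadSq R := by
    intro hin
    set T : Ideal R :=
      { carrier := {z | ∃ w ∈ jacobsonRad R, z = w * j}
        zero_mem' := ⟨0, zero_mem _, (zero_mul j).symm⟩
        add_mem' := by
          rintro a b ⟨w1, hw1, rfl⟩ ⟨w2, hw2, rfl⟩
          exact ⟨w1 + w2, add_mem hw1 hw2, (add_mul _ _ _).symm⟩
        smul_mem' := by
          rintro r z ⟨w, hw, rfl⟩
          exact ⟨r * w, Ideal.mul_mem_left _ r hw, (mul_assoc r w j).symm⟩ } with hT
    have hsub : jacobsonRadSq R ≤ T := by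
      apply Ideal.span_le.mpr
      rintro z ⟨a, haJ, b, hbJ, rfl⟩
      obtain ⟨rb, hrb⟩ := Submodule.mem_span_singleton.mp (hjspan ▸ hbJ)
      exact ⟨a * rb, mem_jacobsonRad.mpr (auxNonunitMulRight rb (mem_jacobsonRad.mp haJ)),
        by rw [← hrb, smul_eq_mul, mul_assoc]⟩
    obtain ⟨w, hw, hjw⟩ := hsub hin
    have hunit : IsUnit (1 - w) := by
      rcases IsLocalRing.isUnit_or_isUnit_of_add_one (a := w) (b := 1 - w) (by abel) with h | h
      · exact absurd h (mem_jacobsonRad.mp hw)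
      · exact h
    obtain ⟨u, hu⟩ := hunit
    have h0 : (↑u : R) * j = 0 := by rw [hu, sub_mul, one_mul, ← hjw, sub_self]
    have hj0 : j = 0 := by
      calc j = ↑u⁻¹ * (↑u * j) := by rw [← mul_assoc, Units.inv_mul, one_mul]
        _ = 0 := by rw [h0, mul_zero]
    exact hjne hj0
  -- the residue division ring
  set J' : TwoSidedIdeal R := TwoSidedIdeal.mk' {x : R | ¬IsUnit x}
    not_isUnit_zero (fun hx hy => auxNonunitAdd hx hy)
    (fun hx => fun h => hx (by simpa using h.neg))
    (fun {x y} hy => auxNonunitMulLeft x hy)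
    (fun {x y} hx => auxNonunitMulRight y hx) with hJ'
  letI D : Type u := J'.ringCon.Quotient
  letI π : R →+* D := RingCon.mk' J'.ringCon
  have hker : ∀ x : R, π x = 0 ↔ ¬IsUnit x := by
    intro x
    have h0 : (0 : D) = π 0 := rfl
    rw [h0]
    show (x : D) = ((0 : R) : D) ↔ _
    rw [RingCon.eq]
    have hmem : J'.ringCon x 0 ↔ x ∈ J' := (TwoSidedIdeal.mem_iff _ _).symm
    rw [hmem, hJ', TwoSidedIdeal.mem_mk']
    rfl
  have hsurjπ : Function.Surjective π := fun d => Quotient.inductionOn' d (fun x => ⟨x, rfl⟩)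
  have hntD : Nontrivial D := ⟨π 1, 0, fun h => (hker 1).mp h isUnit_one⟩
  letI : DivisionRing D := DivisionRing.ofIsUnitOrEqZero (by
    intro d
    obtain ⟨x, rfl⟩ := hsurjπ d
    by_cases hx : IsUnit x
    · exact Or.inl (hx.map π)
    · exact Or.inr ((hker x).mpr hx))
  haveI : Fact p.Prime := ⟨hp⟩
  haveI : NeZero p := ⟨hp.ne_zero⟩
  haveI hcharD : CharP D p := hchar D π hsurjπ (by
    ext z
    rw [RingHom.mem_ker, hker, ← mem_jacobsonRad])
  -- the character of G and the central element map
  obtain ⟨c, g₀, hg₀⟩ := auxGroupHom p hp G r hr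
  letI ι : ZMod p →+* D := ZMod.castHom (dvd_refl p) D
  have hι_inj : Function.Injective ι := ZMod.castHom_injective D
  set v : G → D := fun g => ι (c g).toAdd with hv
  have hvadd : ∀ g h : G, v (g * h) = v g + v h := by
    intro g h
    show ι (c (g * h)).toAdd = ι (c g).toAdd + ι (c h).toAdd
    rw [map_mul, toAdd_mul, map_add]
  have hvcomm : ∀ (d : D) (g : G), v g * d = d * v g := by
    intro d g
    show ι (c g).toAdd * d = d * ι (c g).toAdd
    have hvc : ι (c g).toAdd = (((c g).toAdd.val : ℕ) : D) := by
      rw [ZMod.castHom_apply, ← ZMod.natCast_val]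
    rw [hvc]
    exact (Nat.cast_commute _ d).eq
  have hv1 : v 1 = 0 := by
    show ι (c 1).toAdd = 0
    rw [map_one, toAdd_one, map_zero]
  have hvg₀ : v g₀ ≠ 0 := by
    intro h
    apply hg₀
    apply hι_inj
    rw [map_zero]
    exact h
  -- the augmentation-above-J ideal of the group ring
  set I : Ideal (MonoidAlgebra R G) := Ideal.comap (auxEps R G) (jacobsonRad R) with hI
  obtain ⟨m, hmspan⟩ := (hRG.1 I).principal
  have hmI : m ∈ I := hmspan ▸ Submodule.mem_span_singleton_self m
  have hεm : π (auxEps R G m) = 0 := (hker _).mpr (mem_jacobsonRad.mp (Ideal.mem_comap.mp hmI))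
  have h1I : MonoidAlgebra.single (1 : G) j ∈ I := Ideal.mem_comap.mpr (by
    rw [auxEps_single]; exact hjmem)
  obtain ⟨s, hs⟩ := Submodule.mem_span_singleton.mp (hmspan ▸ h1I)
  rw [smul_eq_mul] at hs
  have hwI : (MonoidAlgebra.single g₀ (1 : R) - 1 : MonoidAlgebra R G) ∈ I :=
    Ideal.mem_comap.mpr (by
      rw [map_sub, map_one, auxEps_single, sub_self]
      exact zero_mem _)
  obtain ⟨t, ht⟩ := Submodule.mem_span_singleton.mp (hmspan ▸ hwI)
  rw [smul_eq_mul] at ht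
  -- the two delta computations
  have hδ1 : auxDelta π v (MonoidAlgebra.single (1 : G) j) = 0 := by
    rw [auxDelta_single, hv1, mul_zero]
  have hδw : auxDelta π v (MonoidAlgebra.single g₀ (1 : R) - 1 : MonoidAlgebra R G) = v g₀ := by
    rw [map_sub, MonoidAlgebra.one_def, auxDelta_single, auxDelta_single, hv1, map_one,
      one_mul, one_mul, sub_zero]
  have e1 : π (auxEps R G s) * auxDelta π v m = 0 := by
    have h := auxDelta_mul π v hvadd hvcomm s m
    rw [hs, hδ1, hεm, mul_zero, zero_add] at h
    exact h.symm
  have e2 : v g₀ = π (auxEps R G t) * auxDelta π v m := by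
    have h := auxDelta_mul π v hvadd hvcomm t m
    rw [ht, hδw, hεm, mul_zero, zero_add] at h
    exact h
  have hδm : auxDelta π v m ≠ 0 := fun h => hvg₀ (by rw [e2, h, mul_zero])
  have hεs0 : π (auxEps R G s) = 0 := by
    rcases mul_eq_zero.mp e1 with h | h
    · exact h
    · exact absurd h hδm
  have hj_eq : auxEps R G s * auxEps R G m = j := by
    have h := congrArg (auxEps R G) hs
    rw [map_mul, auxEps_single] at h
    exact h
  exact hjnsq (Ideal.subset_span ⟨auxEps R G s, mem_jacobsonRad.mpr ((hker _).mp hεs0),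
    auxEps R G m, Ideal.mem_comap.mp hmI, hj_eq.symm⟩)
end

section
/- Let R be an artinian principal ideal ring. If the group ring R[ℤ] of the infinite cyclic group over R (equivalently, the Laurent polynomial ring over R) is a principal ideal ring, then R is a semisimple ring. -/
open Function

universe u v

section AuxSemisimple

variable {R : Type*} [Ring R]

lemma aux_mul_eq_one_comm [IsArtinianRing R] {a b : R} (hab : a * b = 1) : b * a = 1 := by
  have hinj : Function.Injective (LinearMap.toSpanSingleton R R a) := by
    intro x y hxy
    simp only [LinearMap.toSpanSingleton_apply, smul_eq_mul] at hxy
    calc x = x * (a * b) := by rw [hab, mul_one]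
    _ = y * (a * b) := by rw [← mul_assoc, ← mul_assoc, hxy]
    _ = y := by rw [hab, mul_one]
  obtain ⟨u, hu⟩ := IsArtinian.surjective_of_injective_endomorphism _ hinj 1
  simp only [LinearMap.toSpanSingleton_apply, smul_eq_mul] at hu
  have h : u = b := by
    calc u = u * (a * b) := by rw [hab, mul_one]
    _ = (u * a) * b := by rw [mul_assoc]
    _ = b := by rw [hu, one_mul]
  rw [← h]; exact hu

lemma aux_isUnit_of_right_inverse [IsArtinianRing R] {a b : R} (hab : a * b = 1) : IsUnit a :=
  ⟨⟨a, b, hab, aux_mul_eq_one_comm hab⟩, rfl⟩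

lemma aux_isUnit_one_sub_of_mem_jacobson [IsArtinianRing R] {k : R}
    (hk : k ∈ Ideal.jacobson (⊥ : Ideal R)) : IsUnit (1 - k) := by
  have hspan : Ideal.span {1 - k} = ⊤ := by
    by_contra hne
    obtain ⟨m, hm, hle⟩ := Ideal.exists_le_maximal _ hne
    have hkm : k ∈ m := by
      rw [Ideal.jacobson] at hk
      exact Ideal.mem_sInf.mp hk ⟨bot_le, hm⟩
    have h1k : (1 : R) - k ∈ m := hle (Ideal.subset_span rfl)
    have h1 : (1 : R) ∈ m := by simpa using m.add_mem h1k hkm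
    exact hm.ne_top ((Ideal.eq_top_iff_one m).mpr h1)
  have h1 : (1 : R) ∈ Ideal.span ({1 - k} : Set R) := hspan ▸ Submodule.mem_top
  obtain ⟨u, hu⟩ := Submodule.mem_span_singleton.mp h1
  rw [smul_eq_mul] at hu
  exact ⟨⟨1 - k, u, aux_mul_eq_one_comm hu, hu⟩, rfl⟩

open LinearMap in
lemma aux_isSemisimpleRing_of_jacobson_bot [IsArtinianRing R]
    (hJ : Ideal.jacobson (⊥ : Ideal R) = ⊥) : IsSemisimpleRing R := by
  classical
  set S : Set (Ideal R) :=
    {I : Ideal R | ∃ s : Finset (Ideal R), (∀ m ∈ s, m.IsMaximal) ∧ I = s.inf id} with hSdef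
  obtain ⟨N, hNS, hmin⟩ := IsArtinian.set_has_minimal S ⟨⊤, ∅, by simp, by simp⟩
  obtain ⟨s, hs, rfl⟩ := hNS
  have hbot : s.inf id = ⊥ := by
    rw [← le_bot_iff, ← hJ, Ideal.jacobson]
    refine le_sInf ?_
    rintro m ⟨-, hm⟩
    have hmem : (insert m s).inf id ∈ S := by
      refine ⟨insert m s, ?_, rfl⟩
      intro x hx
      rcases Finset.mem_insert.mp hx with rfl | hx
      · exact hm
      · exact hs x hx
    have hle : (insert m s).inf id ≤ s.inf id := by
      rw [Finset.inf_insert]; exact inf_le_right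
    have heq : (insert m s).inf id = s.inf id :=
      hle.lt_or_eq.resolve_left (hmin _ hmem)
    calc s.inf id = (insert m s).inf id := heq.symm
    _ ≤ id m := Finset.inf_le (Finset.mem_insert_self m s)
  -- the product of the simple quotients
  let f : R →ₗ[R] ((i : {x : Ideal R // x ∈ s}) → R ⧸ (i.1 : Ideal R)) :=
    LinearMap.pi (fun i => (i.1 : Ideal R).mkQ)
  have hker : LinearMap.ker f = ⊥ := by
    rw [LinearMap.ker_pi]
    simp only [Submodule.ker_mkQ]
    rw [← hbot, Finset.inf_id_eq_sInf, sInf_eq_iInf']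
    exact le_antisymm (le_iInf fun a => iInf_le (fun i : {x : Ideal R // x ∈ s} => (i.1 : Ideal R)) ⟨a.1, Finset.mem_coe.mpr a.2⟩)
      (le_iInf fun a => iInf_le (fun i : ((s : Set (Ideal R))) => (i.1 : Ideal R)) ⟨a.1, Finset.mem_coe.mp a.2⟩)
  have hsimple : ∀ i : {x : Ideal R // x ∈ s}, IsSimpleModule R (R ⧸ (i.1 : Ideal R)) := by
    intro i
    rw [isSimpleModule_iff_isCoatom]
    exact (hs i.1 i.2).out
  have hss : IsSemisimpleModule R ((i : {x : Ideal R // x ∈ s}) → R ⧸ (i.1 : Ideal R)) := by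
    haveI : ∀ i : {x : Ideal R // x ∈ s}, IsSemisimpleModule R (R ⧸ (i.1 : Ideal R)) := by
      intro i
      haveI := hsimple i
      infer_instance
    exact isSemisimpleModule_of_isSemisimpleModule_submodule'
      (p := fun i => LinearMap.range (LinearMap.single R _ i))
      (fun i => IsSemisimpleModule.range _)
      (by simp_rw [range_eq_map, Submodule.iSup_map_single, Submodule.pi_top])
  have hinj : Function.Injective f := by
    rw [← LinearMap.ker_eq_bot]; exact hker
  exact IsSemisimpleModule.congr (M := LinearMap.range f) (LinearEquiv.ofInjective f hinj)

end AuxSemisimple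


section AuxAug

variable {R : Type*} [Ring R]

/-- The augmentation map `R[ℤ] → R`, sending `X ↦ 1`. -/
noncomputable def augEps (R : Type*) [Ring R] : AddMonoidAlgebra R ℤ →+* R :=
  AddMonoidAlgebra.liftNCRingHom (RingHom.id R) 1 (fun _ _ => by simp [Commute, SemiconjBy])

lemma augEps_single (n : ℤ) (r : R) :
    augEps R (AddMonoidAlgebra.single n r) = r :=
  (AddMonoidAlgebra.liftNC_single _ _ _ _).trans (mul_one r)

/-- The "derivative at 1" map `R[ℤ] → R`, additive, sending `single n r ↦ n • r`. -/
noncomputable def augDelta (R : Type*) [Ring R] : AddMonoidAlgebra R ℤ →+ R :=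
  Finsupp.liftAddHom (fun n : ℤ => AddMonoidHom.mk' (fun r : R => n • r) (fun a b => smul_add n a b))
    |>.comp AddMonoidAlgebra.coeffAddEquiv.toAddMonoidHom

lemma augDelta_single (n : ℤ) (r : R) :
    augDelta R (AddMonoidAlgebra.single n r) = n • r :=
  Finsupp.liftAddHom_apply_single _ _ _

lemma augDelta_mul (u v : AddMonoidAlgebra R ℤ) :
    augDelta R (u * v) = augDelta R u * augEps R v + augEps R u * augDelta R v := by
  induction u using AddMonoidAlgebra.induction_linear with
  | zero => simp
  | add p q hp hq =>
    rw [add_mul, map_add, hp, hq, map_add, map_add, add_mul, add_mul]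
    abel
  | single m a =>
    induction v using AddMonoidAlgebra.induction_linear with
    | zero => simp
    | add p q hp hq =>
      rw [mul_add, map_add, hp, hq, map_add, map_add, mul_add, mul_add]
      abel
    | single n b =>
      rw [AddMonoidAlgebra.single_mul_single, augDelta_single, augEps_single, augEps_single,
        augDelta_single, augDelta_single, add_smul, smul_mul_assoc, mul_smul_comm]

end AuxAug

/-- If `R` is an artinian principal ideal ring and the group ring `R[ℤ]` (the
Laurent polynomial ring) is a principal ideal ring, then `R` is semisimple. -/
theorem semisimple_of_laurent_PIR (R : Type*) [Ring R] (hR : IsArtinianPIR R)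
    (h : IsPrincipalIdealRingNC (AddMonoidAlgebra R ℤ)) :
    IsSemisimpleRing R := by
  obtain ⟨hart, -, -⟩ := hR
  haveI : IsArtinianRing R := hart
  apply aux_isSemisimpleRing_of_jacobson_bot
  rw [eq_bot_iff]
  intro a ha
  rw [Submodule.mem_bot]
  -- Work in the Laurent polynomial ring `A = R[ℤ]`.
  set A := AddMonoidAlgebra R ℤ with hA
  set X : A := AddMonoidAlgebra.single (1 : ℤ) (1 : R) with hX
  set I : Ideal A := Ideal.span {AddMonoidAlgebra.single (0 : ℤ) a, X - 1} with hIdef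
  obtain ⟨f, hf⟩ := (h.1 I).principal
  -- the three membership facts
  have hm1 : AddMonoidAlgebra.single (0 : ℤ) a ∈ I := Ideal.subset_span (Set.mem_insert _ _)
  have hm2 : X - 1 ∈ I := Ideal.subset_span (Set.mem_insert_of_mem _ rfl)
  have hm3 : f ∈ I := by rw [hf]; exact Submodule.mem_span_singleton_self f
  rw [hf] at hm1 hm2
  rw [hIdef] at hm3
  obtain ⟨t, ht⟩ := Submodule.mem_span_singleton.mp hm1
  obtain ⟨g, hg⟩ := Submodule.mem_span_singleton.mp hm2
  obtain ⟨u, v, huv⟩ := Submodule.mem_span_pair.mp hm3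
  rw [smul_eq_mul] at ht hg
  rw [smul_eq_mul, smul_eq_mul] at huv
  -- basic values of ε and δ
  have hεX : augEps R X = 1 := augEps_single 1 1
  have hδX : augDelta R X = 1 := by
    rw [hX, augDelta_single, one_zsmul]
  have hδ1 : augDelta R (1 : A) = 0 := by
    rw [AddMonoidAlgebra.one_def, augDelta_single, zero_zsmul]
  -- ε f lies in the Jacobson radical
  have hεf : augEps R f = augEps R u * a := by
    rw [← huv, map_add, map_mul, map_mul, map_sub, map_one, augEps_single, hεX, sub_self,
      mul_zero, add_zero]
  have hJf : augEps R f ∈ Ideal.jacobson (⊥ : Ideal R) := by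
    rw [hεf, ← smul_eq_mul]
    exact Submodule.smul_mem _ _ ha
  -- consequences of g * f = X - 1
  have hε0 : augEps R g * augEps R f = 0 := by
    rw [← map_mul, hg, map_sub, map_one, hεX, sub_self]
  have hδsum : augDelta R g * augEps R f + augEps R g * augDelta R f = 1 := by
    rw [← augDelta_mul, hg, map_sub, hδX, hδ1, sub_zero]
  have hk : augDelta R g * augEps R f ∈ Ideal.jacobson (⊥ : Ideal R) := by
    rw [← smul_eq_mul]; exact Submodule.smul_mem _ _ hJf
  obtain ⟨c, hc⟩ := aux_isUnit_one_sub_of_mem_jacobson hk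
  have hgc : augEps R g * augDelta R f = 1 - augDelta R g * augEps R f :=
    eq_sub_of_add_eq' hδsum
  have hright : augEps R g * (augDelta R f * ↑c⁻¹) = 1 := by
    calc augEps R g * (augDelta R f * ↑c⁻¹)
        = (augEps R g * augDelta R f) * ↑c⁻¹ := (mul_assoc _ _ _).symm
      _ = (1 - augDelta R g * augEps R f) * ↑c⁻¹ := by rw [hgc]
      _ = ↑c * ↑c⁻¹ := by rw [hc]
      _ = 1 := c.mul_inv
  obtain ⟨w, hw⟩ := aux_isUnit_of_right_inverse hright
  have hf0 : augEps R f = 0 := by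
    calc augEps R f = (↑w⁻¹ * ↑w) * augEps R f := by rw [w.inv_mul, one_mul]
      _ = ↑w⁻¹ * (augEps R g * augEps R f) := by rw [mul_assoc, hw]
      _ = 0 := by rw [hε0, mul_zero]
  have := congrArg (augEps R) ht
  rw [map_mul, augEps_single, hf0, mul_zero] at this
  exact this.symm
end

section
/- Let R be a local artinian ring with Jacobson radical J. Then R is a principal ideal ring if and only if the quotient ring R/J² is a principal ideal ring. -/
open Function

universe u v

section AuxPIR

open Ideal Submodule

namespace AuxPIR

variable {R : Type*} [Ring R]

theorem isUnit_of_mul_eq_one_left' (hloc : IsLocalRing R) {a b : R}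
    (hab : b * a = 1) : IsUnit a := by
  haveI := hloc
  rcases IsLocalRing.isUnit_or_isUnit_of_add_one
      (a := a * b) (b := 1 - a * b) (by abel) with h | h
  · have he : (a * b) * (a * b) = (a * b) * 1 := by
      rw [mul_one]
      calc a * b * (a * b) = a * (b * a) * b := by noncomm_ring
        _ = a * b := by rw [hab, mul_one]
    have h1 : a * b = 1 := h.mul_left_cancel he
    exact ⟨⟨a, b, h1, hab⟩, rfl⟩
  · exfalso
    have hz : (1 - a * b) * a = 0 := by
      have : a * b * a = a := by
        calc a * b * a = a * (b * a) := by rw [mul_assoc]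
          _ = a := by rw [hab, mul_one]
      rw [sub_mul, one_mul, this, sub_self]
    have ha0 : a = 0 := by
      rw [h.mul_right_eq_zero] at hz; exact hz
    apply one_ne_zero (α := R)
    rw [← hab, ha0, mul_zero]

theorem isUnit_of_mul_eq_one_right' (hloc : IsLocalRing R) {a b : R}
    (hab : a * b = 1) : IsUnit a := by
  haveI := hloc
  rcases IsLocalRing.isUnit_or_isUnit_of_add_one
      (a := b * a) (b := 1 - b * a) (by abel) with h | h
  · have he : (b * a) * (b * a) = (b * a) * 1 := by
      rw [mul_one]
      calc b * a * (b * a) = b * (a * b) * a := by noncomm_ring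
        _ = b * a := by rw [hab, mul_one]
    have h1 : b * a = 1 := h.mul_left_cancel he
    exact ⟨⟨a, b, hab, h1⟩, rfl⟩
  · exfalso
    have hz : a * (1 - b * a) = 0 := by
      have : a * (b * a) = a := by rw [← mul_assoc, hab, one_mul]
      rw [mul_sub, mul_one, this, sub_self]
    have ha0 : a = 0 := by
      rw [h.mul_left_eq_zero] at hz; exact hz
    apply one_ne_zero (α := R)
    rw [← hab, ha0, zero_mul]

theorem mem_jacobsonRad_iff (hloc : IsLocalRing R) (x : R) :
    x ∈ jacobsonRad R ↔ ¬ IsUnit x := by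
  haveI := hloc
  constructor
  · intro hx hu
    obtain ⟨M, hM⟩ := Ideal.exists_maximal R
    have hxM : x ∈ M := by
      rw [jacobsonRad, Ideal.jacobson] at hx
      exact Submodule.mem_sInf.1 hx M ⟨bot_le, hM⟩
    exact hM.ne_top (Ideal.eq_top_of_isUnit_mem M hxM hu)
  · intro hx
    rw [jacobsonRad, Ideal.jacobson]
    refine Submodule.mem_sInf.2 fun M hM => ?_
    by_contra hxM
    have hlt : M < M ⊔ Ideal.span {x} := by
      rw [left_lt_sup]
      intro hle
      exact hxM (hle (Ideal.subset_span rfl))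
    have htop : M ⊔ Ideal.span {x} = ⊤ := hM.2.out.2 _ hlt
    have h1 : (1 : R) ∈ M ⊔ Ideal.span {x} := htop ▸ Submodule.mem_top
    obtain ⟨m, hm, z, hz, hmz⟩ := Submodule.mem_sup.1 h1
    obtain ⟨r, hr⟩ := Ideal.mem_span_singleton'.1 hz
    rcases IsLocalRing.isUnit_or_isUnit_of_add_one (a := m) (b := z) hmz with h | h
    · exact hM.2.ne_top (Ideal.eq_top_of_isUnit_mem M hm h)
    · obtain ⟨u, hu⟩ := h
      apply hx
      apply isUnit_of_mul_eq_one_left' hloc (b := ↑u⁻¹ * r)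
      rw [mul_assoc, hr, ← hu, Units.inv_mul]

theorem jacobsonRad_mul_mem (hloc : IsLocalRing R) {x : R}
    (hx : x ∈ jacobsonRad R) (r : R) : x * r ∈ jacobsonRad R := by
  rw [mem_jacobsonRad_iff hloc] at hx ⊢
  intro h
  obtain ⟨u, hu⟩ := h
  apply hx
  apply isUnit_of_mul_eq_one_right' hloc (b := r * ↑u⁻¹)
  rw [← mul_assoc, ← hu, Units.mul_inv]

theorem isUnit_one_sub_of_mem (hloc : IsLocalRing R) {y : R}
    (hy : y ∈ jacobsonRad R) : IsUnit (1 - y) := by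
  by_contra h
  rw [← mem_jacobsonRad_iff hloc] at h
  have : (1 : R) ∈ jacobsonRad R := by
    have := (jacobsonRad R).add_mem hy h
    simpa using this
  rw [mem_jacobsonRad_iff hloc] at this
  exact this isUnit_one

/-- Powers of the Jacobson radical, defined by iterated products. -/
def Jp (R : Type*) [Ring R] : ℕ → Ideal R
  | 0 => ⊤
  | (n+1) => Jp R n • jacobsonRad R

theorem Jp_one : Jp R 1 = jacobsonRad R := by
  show (⊤ : Ideal R) • jacobsonRad R = _
  exact Submodule.top_smul _

theorem Jp_succ_le_jac (n : ℕ) : Jp R (n + 1) ≤ jacobsonRad R :=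
  Submodule.smul_le_right

theorem Jp_twosided (hloc : IsLocalRing R) :
    ∀ n, ∀ x ∈ Jp R n, ∀ r : R, x * r ∈ Jp R n := by
  intro n
  induction n with
  | zero => intro x _ r; exact Submodule.mem_top
  | succ n ih =>
    intro x hx r
    refine Submodule.smul_induction_on hx (fun c hc y hy => ?_)
      (fun z₁ z₂ h₁ h₂ => ?_)
    · have : c • y * r = c • (y * r) := by
        simp only [smul_eq_mul, mul_assoc]
      rw [this]
      exact Submodule.smul_mem_smul hc (jacobsonRad_mul_mem hloc hy r)
    · rw [add_mul]; exact (Jp R (n+1)).add_mem h₁ h₂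

theorem Jp_succ_le (hloc : IsLocalRing R) (n : ℕ) : Jp R (n + 1) ≤ Jp R n := by
  refine Submodule.smul_le.2 fun c hc y _ => ?_
  rw [smul_eq_mul]
  exact Jp_twosided hloc n c hc y

theorem Jp_antitone (hloc : IsLocalRing R) : Antitone (Jp R) :=
  antitone_nat_of_succ_le (Jp_succ_le hloc)

theorem Jp_add (m n : ℕ) : Jp R (m + (n + 1)) = Jp R m • Jp R (n + 1) := by
  induction n with
  | zero => rw [Jp_one]; rfl
  | succ n ih =>
    have : m + (n + 1 + 1) = (m + (n + 1)) + 1 := by omega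
    rw [this]
    show Jp R (m + (n+1)) • jacobsonRad R = _
    rw [ih]
    rw [Submodule.smul_assoc]
    rfl

theorem Jp_two : Jp R 2 = jacobsonRad R • jacobsonRad R := by
  show Jp R 1 • jacobsonRad R = _
  rw [Jp_one]

theorem Jp_two_eq_radSq : Jp R 2 = jacobsonRadSq R := by
  rw [Jp_two, jacobsonRadSq]
  apply le_antisymm
  · refine Submodule.smul_le.2 fun a ha b hb => ?_
    rw [smul_eq_mul]
    exact Ideal.subset_span ⟨a, ha, b, hb, rfl⟩
  · rw [Ideal.span_le]
    rintro x ⟨a, ha, b, hb, rfl⟩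
    exact Submodule.smul_mem_smul ha hb

theorem Jp_span (hloc : IsLocalRing R) {a : R}
    (ha : jacobsonRad R = Ideal.span {a}) :
    ∀ n, Jp R n = Ideal.span {a ^ n} := by
  intro n
  induction n with
  | zero => rw [pow_zero, Ideal.span_singleton_one]; rfl
  | succ n ih =>
    show Jp R n • jacobsonRad R = _
    rw [ih, ha]
    apply le_antisymm
    · refine Submodule.smul_le.2 fun x hx y hy => ?_
      obtain ⟨s, hs⟩ := Ideal.mem_span_singleton'.1 hx
      obtain ⟨t, ht⟩ := Ideal.mem_span_singleton'.1 hy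
      have hant : a ^ n * t ∈ Ideal.span {a ^ n} := by
        rw [← ih]
        refine Jp_twosided hloc n _ ?_ t
        rw [ih]
        exact Ideal.subset_span rfl
      obtain ⟨u, hu⟩ := Ideal.mem_span_singleton'.1 hant
      refine Ideal.mem_span_singleton'.2 ⟨s * u, ?_⟩
      rw [smul_eq_mul, ← hs, ← ht, pow_succ]
      calc s * u * (a ^ n * a) = s * (u * a ^ n) * a := by noncomm_ring
        _ = s * (a ^ n * t) * a := by rw [hu]
        _ = s * a ^ n * (t * a) := by noncomm_ring
    · rw [Ideal.span_le]
      rintro x (rfl : x = a ^ (n+1))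
      have : a ^ (n+1) = (a ^ n) • a := by rw [smul_eq_mul, pow_succ]
      rw [this]
      exact Submodule.smul_mem_smul (Ideal.subset_span rfl) (Ideal.subset_span rfl)

theorem mem_smul_span_singleton_jac (hloc : IsLocalRing R) {I : Ideal R}
    (hI : I ≤ jacobsonRad R) {m x : R} (h : x ∈ I • (Ideal.span {m} : Ideal R)) :
    ∃ y ∈ jacobsonRad R, y * m = x := by
  refine Submodule.smul_induction_on h ?_ ?_
  · intro r hr n hn
    obtain ⟨s, hs⟩ := Ideal.mem_span_singleton'.1 hn
    refine ⟨r * s, jacobsonRad_mul_mem hloc (hI hr) s, ?_⟩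
    rw [smul_eq_mul, ← hs, mul_assoc]
  · rintro x₁ x₂ ⟨y₁, hy₁, rfl⟩ ⟨y₂, hy₂, rfl⟩
    exact ⟨y₁ + y₂, (jacobsonRad R).add_mem hy₁ hy₂, add_mul y₁ y₂ m⟩

theorem Jp_nilpotent (hloc : IsLocalRing R) (hart : IsArtinianRing R) :
    ∃ N, Jp R N = ⊥ := by
  haveI := hart
  have hanti : Antitone (Jp R) := Jp_antitone hloc
  obtain ⟨n, hn⟩ := IsArtinian.monotone_stabilizes (R := R) (M := R)
    (⟨fun k => OrderDual.toDual (Jp R k), fun i j hij => hanti hij⟩ :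
      ℕ →o (Submodule R R)ᵒᵈ)
  set K := Jp R (n + 1) with hK
  have hstab : ∀ m, n + 1 ≤ m → Jp R m = K := by
    intro m hm
    have h1 := hn m (by omega)
    have h2 := hn (n+1) (by omega)
    exact (h2.symm.trans h1).symm
  have hKK : K • K = K := by
    have := Jp_add (R := R) (n + 1) n
    rw [← hK] at this
    rw [← this]
    exact hstab _ (by omega)
  have hKJ : K ≤ jacobsonRad R := Jp_succ_le_jac n
  refine ⟨n + 1, ?_⟩
  by_contra hKne
  rw [← hK] at hKne
  have hFne : ({I : Ideal R | I ≤ K ∧ K • I ≠ ⊥} : Set (Ideal R)).Nonempty :=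
    ⟨K, le_rfl, by rw [hKK]; exact hKne⟩
  obtain ⟨I₀, ⟨hI₀K, hI₀ne⟩, hmin⟩ := IsArtinian.set_has_minimal
    {I : Ideal R | I ≤ K ∧ K • I ≠ ⊥} hFne
  have hex : ∃ k ∈ K, ∃ i ∈ I₀, k * i ≠ 0 := by
    by_contra hc
    push_neg at hc
    apply hI₀ne
    refine le_bot_iff.1 (Submodule.smul_le.2 fun r hr m hm => ?_)
    rw [smul_eq_mul]
    simp [hc r hr m hm]
  obtain ⟨k, hk, i, hi, hki⟩ := hex
  set A : Ideal R := Ideal.span {i} with hA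
  have hAK : A ≤ K := by
    rw [hA, Ideal.span_le, Set.singleton_subset_iff]
    exact hI₀K hi
  have hiA : i ∈ A := Ideal.subset_span rfl
  set B : Ideal R := K • A with hB
  have hBA : B ≤ A := Submodule.smul_le_right
  have hBI₀ : B ≤ I₀ := hBA.trans (by rw [hA, Ideal.span_le, Set.singleton_subset_iff]; exact hi)
  have hBne : B ≠ ⊥ := by
    intro h
    apply hki
    have : k • i ∈ B := Submodule.smul_mem_smul hk hiA
    rw [h] at this
    simpa using this
  have hBF : B ∈ {I : Ideal R | I ≤ K ∧ K • I ≠ ⊥} := by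
    refine ⟨hBA.trans hAK, ?_⟩
    rw [hB, ← Submodule.smul_assoc, hKK, ← hB]
    exact hBne
  have hBeq : B = I₀ := by
    by_contra hne
    exact hmin B hBF (lt_of_le_of_ne hBI₀ hne)
  have hiB : i ∈ B := hBeq ▸ hi
  rw [hB, hA] at hiB
  obtain ⟨y, hyJ, hyi⟩ := mem_smul_span_singleton_jac hloc hKJ hiB
  have hzero : (1 - y) * i = 0 := by
    rw [sub_mul, one_mul, hyi, sub_self]
  have hi0 : i = 0 := by
    have hu := isUnit_one_sub_of_mem hloc hyJ
    rwa [hu.mul_right_eq_zero] at hzero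
  exact hki (by rw [hi0, mul_zero])

/-- Preimage of elements of a mapped ideal. -/
theorem exists_preimage_of_mem_map {S : Type*} [Ring S] (f : R →+* S)
    (hf : Function.Surjective f) (J : Ideal R) {y : S} (hy : y ∈ Ideal.map f J) :
    ∃ x ∈ J, f x = y := by
  have : y ∈ Ideal.span (f '' (J : Set R)) := hy
  refine Submodule.span_induction ?_ ?_ ?_ ?_ this
  · rintro z ⟨x, hx, rfl⟩; exact ⟨x, hx, rfl⟩
  · exact ⟨0, J.zero_mem, map_zero f⟩
  · rintro z₁ z₂ _ _ ⟨x₁, hx₁, rfl⟩ ⟨x₂, hx₂, rfl⟩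
    exact ⟨x₁ + x₂, J.add_mem hx₁ hx₂, map_add f x₁ x₂⟩
  · rintro s z _ ⟨x, hx, rfl⟩
    obtain ⟨r, rfl⟩ := hf s
    exact ⟨r * x, J.mul_mem_left r hx, map_mul f r x⟩

/-- Main backward lemma: left ideals of `R` are principal when those of `S ≅ R/J²` are. -/
theorem main_left {R : Type u} {S : Type v} [Ring R] [Ring S]
    (hloc : IsLocalRing R) (hart : IsArtinianRing R) (f : R →+* S)
    (hf : Function.Surjective f) (hker : RingHom.ker f = jacobsonRadSq R)
    (hS : ∀ I : Ideal S, I.IsPrincipal) (I : Ideal R) : I.IsPrincipal := by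
  classical
  haveI := hart
  -- find a generator of J
  obtain ⟨s, hs⟩ := (hS (Ideal.map f (jacobsonRad R))).principal
  rw [Ideal.submodule_span_eq] at hs
  have hsmem : s ∈ Ideal.map f (jacobsonRad R) := by
    rw [hs]; exact Ideal.subset_span rfl
  obtain ⟨a, haJ, hfa⟩ := exists_preimage_of_mem_map f hf _ hsmem
  set T : Ideal R := Ideal.span {a} with hT
  have hTJ : T ≤ jacobsonRad R := by
    rw [hT, Ideal.span_le, Set.singleton_subset_iff]; exact haJ
  have hJle : jacobsonRad R ≤ T ⊔ Jp R 2 := by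
    intro j hj
    have : f j ∈ Ideal.map f (jacobsonRad R) := Ideal.mem_map_of_mem f hj
    rw [hs] at this
    obtain ⟨t, ht⟩ := Ideal.mem_span_singleton'.1 this
    obtain ⟨r, rfl⟩ := hf t
    have hkerm : j - r * a ∈ Jp R 2 := by
      rw [Jp_two_eq_radSq, ← hker, RingHom.mem_ker, map_sub, _root_.map_mul, hfa, ht, sub_self]
    have : j = r * a + (j - r * a) := by abel
    rw [this]
    exact Submodule.add_mem _
      (Submodule.mem_sup_left (Ideal.mem_span_singleton'.2 ⟨r, rfl⟩))
      (Submodule.mem_sup_right hkerm)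
  -- Nakayama induction
  have hnak : ∀ k, jacobsonRad R ≤ T ⊔ Jp R (k + 2) := by
    intro k
    induction k with
    | zero => exact hJle
    | succ k ih =>
      have h2 : Jp R 2 ≤ T ⊔ Jp R (k + 3) := by
        rw [Jp_two]
        refine Submodule.smul_le.2 fun x hx y hy => ?_
        obtain ⟨t, ht, z, hz, rfl⟩ := Submodule.mem_sup.1 (ih hy)
        rw [smul_eq_mul, mul_add]
        refine Submodule.add_mem _ ?_ ?_
        · obtain ⟨r, rfl⟩ := Ideal.mem_span_singleton'.1 ht
          exact Submodule.mem_sup_left (Ideal.mem_span_singleton'.2 ⟨x * r, mul_assoc x r a⟩)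
        · apply Submodule.mem_sup_right
          have h13 : (k + 3 : ℕ) = 1 + (k + 2) := by omega
          rw [h13, Jp_add, Jp_one]
          exact Submodule.smul_mem_smul hx hz
      calc jacobsonRad R ≤ T ⊔ Jp R 2 := hJle
        _ ≤ T ⊔ (T ⊔ Jp R (k + 3)) := sup_le_sup_left h2 T
        _ = T ⊔ Jp R (k + 3) := by rw [← sup_assoc, sup_idem]
  obtain ⟨N, hN⟩ := Jp_nilpotent hloc hart
  have hJT : jacobsonRad R = T := by
    apply le_antisymm _ hTJ
    have := hnak N
    have hb : Jp R (N + 2) ≤ Jp R N := Jp_antitone hloc (by omega)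
    rw [hN, le_bot_iff] at hb
    rwa [hb, sup_bot_eq] at this
  -- classification of left ideals
  by_cases hI : I = ⊥
  · exact ⟨⟨0, by rw [hI, Ideal.submodule_span_eq, Ideal.span_singleton_eq_bot.mpr rfl]⟩⟩
  · have hexk : ∃ k, ¬ I ≤ Jp R k := by
      refine ⟨N, fun h => hI ?_⟩
      rw [← le_bot_iff, ← hN]; exact h
    have hpos : 0 < Nat.find hexk := by
      rcases Nat.eq_zero_or_pos (Nat.find hexk) with h | h
      · exfalso
        have := Nat.find_spec hexk
        rw [h] at this
        exact this le_top
      · exact h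
    set k := Nat.find hexk - 1 with hk
    have hfind : Nat.find hexk = k + 1 := by omega
    have hnle : ¬ I ≤ Jp R (k + 1) := hfind ▸ Nat.find_spec hexk
    have hle : I ≤ Jp R k := by
      by_contra h
      exact Nat.find_min hexk (by omega) h
    obtain ⟨x, hxI, hxn⟩ := SetLike.not_le_iff_exists.1 hnle
    have hxk : x ∈ Ideal.span {a ^ k} := by
      rw [← Jp_span hloc hJT k]
      exact hle hxI
    obtain ⟨r, hr⟩ := Ideal.mem_span_singleton'.1 hxk
    have hrJ : r ∉ jacobsonRad R := by
      intro hrJ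
      apply hxn
      rw [hJT] at hrJ
      obtain ⟨t, ht⟩ := Ideal.mem_span_singleton'.1 hrJ
      rw [Jp_span hloc hJT (k+1)]
      refine Ideal.mem_span_singleton'.2 ⟨t, ?_⟩
      rw [← hr, ← ht, pow_succ']
      noncomm_ring
    have hru : IsUnit r := by
      by_contra h
      exact hrJ ((mem_jacobsonRad_iff hloc r).2 h)
    obtain ⟨u, rfl⟩ := hru
    have hak : a ^ k ∈ I := by
      have : (↑u⁻¹ : R) * x ∈ I := I.mul_mem_left _ hxI
      rwa [← hr, ← mul_assoc, Units.inv_mul, one_mul] at this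
    refine ⟨⟨a ^ k, ?_⟩⟩
    rw [Ideal.submodule_span_eq]
    refine le_antisymm (hle.trans (le_of_eq (Jp_span hloc hJT k))) ?_
    rw [Ideal.span_le, Set.singleton_subset_iff]
    exact hak


section Transfer

open Ideal

variable {R : Type u} {S : Type v} [Ring R] [Ring S]

/-- Forward: surjective image of a ring with principal left ideals. -/
theorem fwd_principal (f : R →+* S) (hf : Function.Surjective f)
    (h : ∀ I : Ideal R, I.IsPrincipal) (I : Ideal S) : I.IsPrincipal := by
  obtain ⟨a, ha⟩ := (h (Ideal.comap f I)).principal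
  rw [Ideal.submodule_span_eq] at ha
  refine ⟨⟨f a, ?_⟩⟩
  rw [Ideal.submodule_span_eq, ← Ideal.map_comap_of_surjective f hf I, ha,
    Ideal.map_span, Set.image_singleton]

theorem isLocalRing_op (hloc : IsLocalRing R) : IsLocalRing Rᵐᵒᵖ := by
  haveI := hloc
  refine ⟨fun {a b} h => ?_⟩
  have h' : a.unop + b.unop = 1 := by
    have := congrArg MulOpposite.unop h
    simpa using this
  rcases IsLocalRing.isUnit_or_isUnit_of_add_one h' with hu | hu
  · left; simpa using hu.op
  · right; simpa using hu.op

theorem isUnit_unop_iff (x : Rᵐᵒᵖ) : IsUnit x ↔ IsUnit x.unop := by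
  constructor
  · intro h; simpa using h.unop
  · intro h; simpa using h.op

theorem mem_jacobsonRad_op_iff (hloc : IsLocalRing R) (x : Rᵐᵒᵖ) :
    x ∈ jacobsonRad Rᵐᵒᵖ ↔ x.unop ∈ jacobsonRad R := by
  rw [mem_jacobsonRad_iff (isLocalRing_op hloc), mem_jacobsonRad_iff hloc,
    isUnit_unop_iff]

/-- `jacobsonRadSq` as an additive closure. -/
theorem mem_radSq_iff_closure {R : Type*} [Ring R] (x : R) :
    x ∈ jacobsonRadSq R ↔
      x ∈ AddSubmonoid.closure
        {x : R | ∃ a ∈ jacobsonRad R, ∃ b ∈ jacobsonRad R, x = a * b} := by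
  constructor
  · intro hx
    refine Submodule.span_induction ?_ ?_ ?_ ?_ hx
    · intro z hz; exact AddSubmonoid.subset_closure hz
    · exact AddSubmonoid.zero_mem _
    · intro z₁ z₂ _ _ h₁ h₂; exact AddSubmonoid.add_mem _ h₁ h₂
    · intro r z _ hz
      refine AddSubmonoid.closure_induction ?_ ?_ ?_ hz
      · rintro w ⟨a, ha, b, hb, rfl⟩
        refine AddSubmonoid.subset_closure ⟨r * a, ?_, b, hb, ?_⟩
        · exact (jacobsonRad R).mul_mem_left r ha
        · rw [smul_eq_mul, mul_assoc]
      · rw [smul_zero]; exact AddSubmonoid.zero_mem _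
      · intro w₁ w₂ _ _ h₁ h₂
        rw [smul_add]; exact AddSubmonoid.add_mem _ h₁ h₂
  · intro hx
    refine AddSubmonoid.closure_induction ?_ ?_ ?_ hx
    · intro z hz; exact Ideal.subset_span hz
    · exact (jacobsonRadSq R).zero_mem
    · intro z₁ z₂ _ _ h₁ h₂; exact (jacobsonRadSq R).add_mem h₁ h₂

theorem mem_radSq_op_iff (hloc : IsLocalRing R) (x : Rᵐᵒᵖ) :
    x ∈ jacobsonRadSq Rᵐᵒᵖ ↔ x.unop ∈ jacobsonRadSq R := by
  rw [mem_radSq_iff_closure, mem_radSq_iff_closure]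
  constructor
  · intro hx
    refine AddSubmonoid.closure_induction (motive := fun z _ =>
      z.unop ∈ AddSubmonoid.closure
        {x : R | ∃ a ∈ jacobsonRad R, ∃ b ∈ jacobsonRad R, x = a * b}) ?_ ?_ ?_ hx
    · rintro w ⟨a, ha, b, hb, rfl⟩
      refine AddSubmonoid.subset_closure ⟨b.unop, ?_, a.unop, ?_, ?_⟩
      · exact (mem_jacobsonRad_op_iff hloc b).1 hb
      · exact (mem_jacobsonRad_op_iff hloc a).1 ha
      · simp
    · simpa using AddSubmonoid.zero_mem _
    · intro w₁ w₂ _ _ h₁ h₂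
      rw [MulOpposite.unop_add]; exact AddSubmonoid.add_mem _ h₁ h₂
  · intro hx
    have hgen : ∀ w ∈ AddSubmonoid.closure
        {x : R | ∃ a ∈ jacobsonRad R, ∃ b ∈ jacobsonRad R, x = a * b},
        MulOpposite.op w ∈ AddSubmonoid.closure
          {x : Rᵐᵒᵖ | ∃ a ∈ jacobsonRad Rᵐᵒᵖ, ∃ b ∈ jacobsonRad Rᵐᵒᵖ, x = a * b} := by
      intro w hw
      refine AddSubmonoid.closure_induction (motive := fun z _ =>
        MulOpposite.op z ∈ AddSubmonoid.closure
          {x : Rᵐᵒᵖ | ∃ a ∈ jacobsonRad Rᵐᵒᵖ, ∃ b ∈ jacobsonRad Rᵐᵒᵖ, x = a * b}) ?_ ?_ ?_ hw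
      · rintro v ⟨a, ha, b, hb, rfl⟩
        refine AddSubmonoid.subset_closure ⟨MulOpposite.op b, ?_, MulOpposite.op a, ?_, ?_⟩
        · rw [mem_jacobsonRad_op_iff hloc]; simpa using hb
        · rw [mem_jacobsonRad_op_iff hloc]; simpa using ha
        · simp
      · simpa using AddSubmonoid.zero_mem _
      · intro w₁ w₂ _ _ h₁ h₂
        rw [MulOpposite.op_add]; exact AddSubmonoid.add_mem _ h₁ h₂
    have := hgen _ hx
    simpa using this

end Transfer

end AuxPIR

end AuxPIR

/-- A local artinian ring `R` is a principal ideal ring iff `R/J²` is a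
principal ideal ring.  The quotient is realized by any surjective ring
homomorphism with kernel `J(R)²`. -/
theorem local_PIR_iff_quotient_radSq_PIR (R : Type u) [Ring R]
    (hloc : IsLocalRing R) (hart : IsArtinianRing R) (hartop : IsArtinianRing Rᵐᵒᵖ)
    (S : Type u) [Ring S] (f : R →+* S) (hf : Function.Surjective f)
    (hker : RingHom.ker f = jacobsonRadSq R) :
    IsPrincipalIdealRingNC R ↔ IsPrincipalIdealRingNC S := by
  have hfop : Function.Surjective (RingHom.op f) := by
    intro y
    obtain ⟨x, hx⟩ := hf y.unop
    exact ⟨MulOpposite.op x, by simp [RingHom.op, hx]⟩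
  constructor
  · rintro ⟨h1, h2⟩
    exact ⟨AuxPIR.fwd_principal f hf h1, AuxPIR.fwd_principal (RingHom.op f) hfop h2⟩
  · rintro ⟨h1, h2⟩
    have hkerop : RingHom.ker (RingHom.op f) = jacobsonRadSq Rᵐᵒᵖ := by
      ext x
      rw [RingHom.mem_ker, AuxPIR.mem_radSq_op_iff hloc]
      have hx : (RingHom.op f) x = MulOpposite.op (f x.unop) := rfl
      rw [hx, MulOpposite.op_eq_zero_iff, ← RingHom.mem_ker, hker]
    exact ⟨AuxPIR.main_left hloc hart f hf hker h1,
      AuxPIR.main_left (AuxPIR.isLocalRing_op hloc) hartop (RingHom.op f) hfop hkerop h2⟩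
end

section
/- Let R be an artinian ring with Jacobson radical J(R), and let G be a finite group such that |G|·1 is a unit of R. Then the Jacobson radical of the group ring RG equals J(R)G, i.e., it equals the kernel of the natural surjective ring homomorphism RG → (R/J(R))G induced by the quotient map R → R/J(R) (the set of elements of RG all of whose coefficients lie in J(R)). -/
open Function

universe u v

namespace JGRAux

section LemA
variable {A : Type*} [Ring A]

lemma exists_left_inv_one_sub {a : A} (ha : a ∈ Ideal.jacobson (⊥ : Ideal A)) :
    ∃ z : A, z * (1 - a) = 1 := by
  obtain ⟨z, hz⟩ := Ideal.mem_jacobson_iff.mp ha (-1)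
  rw [Ideal.mem_bot] at hz
  refine ⟨z, ?_⟩
  have h : z * -1 * a + z - 1 = z * (1 - a) - 1 := by noncomm_ring
  rw [h] at hz
  exact sub_eq_zero.mp hz

lemma isUnit_one_sub {a : A} (ha : a ∈ Ideal.jacobson (⊥ : Ideal A)) :
    IsUnit (1 - a) := by
  obtain ⟨z, hz⟩ := exists_left_inv_one_sub ha
  have hza : -(z * a) ∈ Ideal.jacobson (⊥ : Ideal A) :=
    neg_mem (Ideal.mul_mem_left _ z ha)
  obtain ⟨z₂, hz₂⟩ := exists_left_inv_one_sub hza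
  have hzz : 1 - -(z * a) = z := by
    have h2 : z * (1 - a) = z - z * a := by noncomm_ring
    rw [h2] at hz
    rw [sub_neg_eq_add]
    exact (sub_eq_iff_eq_add.mp hz).symm
  rw [hzz] at hz₂
  have h1 : (1 - a) = z₂ := by
    calc 1 - a = 1 * (1 - a) := (one_mul _).symm
    _ = (z₂ * z) * (1 - a) := by rw [hz₂]
    _ = z₂ * (z * (1 - a)) := by rw [mul_assoc]
    _ = z₂ := by rw [hz, mul_one]
  exact ⟨⟨1 - a, z, by rw [h1]; exact hz₂, hz⟩, rfl⟩

end LemA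

section GroupRing
variable {R : Type*} [Ring R] {G : Type*} [Group G]

lemma mul_coeff_mem (J : Ideal R) (y v : MonoidAlgebra R G)
    (hv : ∀ g, v.coeff g ∈ J) (g : G) : (y * v).coeff g ∈ J := by
  classical
  rw [MonoidAlgebra.mul_apply]
  refine Ideal.sum_mem _ fun a _ => Ideal.sum_mem _ fun b _ => ?_
  dsimp only
  split_ifs
  · exact Ideal.mul_mem_left _ _ (hv b)
  · exact zero_mem _

/-- Nakayama-style induction over a finset of group elements. -/
lemma one_mem_of_decomp [DecidableEq G] (N : Ideal (MonoidAlgebra R G)) (s : Finset G)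
    (H : ∀ y : MonoidAlgebra R G, ∃ n ∈ N, ∃ w : MonoidAlgebra R G,
      (∀ g, w.coeff g ∈ Ideal.jacobson (⊥ : Ideal R)) ∧ (∀ g ∉ s, w.coeff g = 0) ∧ y = n + w) :
    (1 : MonoidAlgebra R G) ∈ N := by
  classical
  induction s using Finset.induction_on with
  | empty =>
    obtain ⟨n, hn, w, _, hws, hw⟩ := H 1
    have : w = 0 := MonoidAlgebra.ext (Finsupp.ext fun g => hws g (Finset.notMem_empty g))
    rw [this, add_zero] at hw
    rwa [hw]
  | @insert g t hg ih =>
    obtain ⟨n, hn, w, hwJ, hws, hw⟩ := H (MonoidAlgebra.single g 1)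
    set a := w.coeff g with ha_def
    obtain ⟨u, hu⟩ := isUnit_one_sub (hwJ g)
    have esub : (MonoidAlgebra.single g (1 - a) : MonoidAlgebra R G)
        = MonoidAlgebra.single g 1 - MonoidAlgebra.single g a := MonoidAlgebra.single_sub _ _ _
    have e1 : n + (w - MonoidAlgebra.single g a) = MonoidAlgebra.single g (1 - a) := by
      rw [esub, hw]; abel
    have key : MonoidAlgebra.single g (1 : R)
        = MonoidAlgebra.single (1 : G) ((u⁻¹ : Rˣ) : R) * n
          + MonoidAlgebra.single (1 : G) ((u⁻¹ : Rˣ) : R) * (w - MonoidAlgebra.single g a) := by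
      rw [← mul_add, e1, MonoidAlgebra.single_mul_single, one_mul, ← hu, Units.inv_mul]
    set n₀ := MonoidAlgebra.single (1 : G) ((u⁻¹ : Rˣ) : R) * n with hn₀_def
    set w₀ := MonoidAlgebra.single (1 : G) ((u⁻¹ : Rˣ) : R) * (w - MonoidAlgebra.single g a)
      with hw₀_def
    have hn₀ : n₀ ∈ N := N.mul_mem_left _ hn
    have hw₀c : ∀ h, w₀.coeff h = ((u⁻¹ : Rˣ) : R) * (w.coeff h - (MonoidAlgebra.single g a).coeff h) := by
      intro h
      rw [hw₀_def, MonoidAlgebra.single_one_mul_apply, MonoidAlgebra.coeff_sub, Finsupp.sub_apply]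
    have hw₀J : ∀ h, w₀.coeff h ∈ Ideal.jacobson (⊥ : Ideal R) := by
      intro h
      rw [hw₀c h]
      refine Ideal.mul_mem_left _ _ (sub_mem (hwJ h) ?_)
      by_cases hhg : h = g
      · subst hhg; rw [MonoidAlgebra.coeff_single, Finsupp.single_eq_same]; exact hwJ h
      · rw [MonoidAlgebra.coeff_single, Finsupp.single_eq_of_ne' (Ne.symm hhg)]; exact zero_mem _
    have hw₀s : ∀ h ∉ t, w₀.coeff h = 0 := by
      intro h hh
      rw [hw₀c h]
      by_cases hhg : h = g
      · subst hhg; rw [MonoidAlgebra.coeff_single, Finsupp.single_eq_same, sub_self, mul_zero]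
      · rw [MonoidAlgebra.coeff_single, Finsupp.single_eq_of_ne' (Ne.symm hhg),
          hws h (by simp [Finset.mem_insert, hhg, hh]), sub_zero, mul_zero]
    apply ih
    intro y
    obtain ⟨n₁, hn₁, w₁, hw₁J, hw₁s, hw₁⟩ := H y
    refine ⟨n₁ + MonoidAlgebra.single (1 : G) (w₁.coeff g) * n₀,
      add_mem hn₁ (N.mul_mem_left _ hn₀),
      (w₁ - MonoidAlgebra.single g (w₁.coeff g)) + MonoidAlgebra.single (1 : G) (w₁.coeff g) * w₀,
      ?_, ?_, ?_⟩
    · intro h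
      rw [MonoidAlgebra.coeff_add, Finsupp.add_apply, MonoidAlgebra.coeff_sub, Finsupp.sub_apply, MonoidAlgebra.single_one_mul_apply]
      refine add_mem (sub_mem (hw₁J h) ?_) (Ideal.mul_mem_left _ _ (hw₀J h))
      by_cases hhg : h = g
      · subst hhg; rw [MonoidAlgebra.coeff_single, Finsupp.single_eq_same]; exact hw₁J h
      · rw [MonoidAlgebra.coeff_single, Finsupp.single_eq_of_ne' (Ne.symm hhg)]; exact zero_mem _
    · intro h hh
      rw [MonoidAlgebra.coeff_add, Finsupp.add_apply, MonoidAlgebra.coeff_sub, Finsupp.sub_apply, MonoidAlgebra.single_one_mul_apply,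
        hw₀s h hh, mul_zero, add_zero]
      by_cases hhg : h = g
      · subst hhg; rw [MonoidAlgebra.coeff_single, Finsupp.single_eq_same, sub_self]
      · rw [MonoidAlgebra.coeff_single, Finsupp.single_eq_of_ne' (Ne.symm hhg),
          hw₁s h (by simp [Finset.mem_insert, hhg, hh]), sub_zero]
    · have hs : MonoidAlgebra.single g (w₁.coeff g)
          = MonoidAlgebra.single (1 : G) (w₁.coeff g) * n₀
            + MonoidAlgebra.single (1 : G) (w₁.coeff g) * w₀ := by
        rw [← mul_add, ← key, MonoidAlgebra.single_mul_single, one_mul, mul_one]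
      rw [hw₁]
      rw [hs]
      abel

lemma exists_left_inv_one_add [Finite G] (v : MonoidAlgebra R G)
    (hv : ∀ g, v.coeff g ∈ Ideal.jacobson (⊥ : Ideal R)) :
    ∃ z : MonoidAlgebra R G, z * (1 + v) = 1 := by
  classical
  cases nonempty_fintype G
  have h1 : (1 : MonoidAlgebra R G) ∈ Ideal.span {(1 + v : MonoidAlgebra R G)} := by
    apply one_mem_of_decomp _ Finset.univ
    intro y
    refine ⟨y * (1 + v), Ideal.mul_mem_left _ _ (Ideal.subset_span rfl),
      -(y * v), fun g => ?_, fun g hg => absurd (Finset.mem_univ g) hg, by noncomm_ring⟩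
    rw [MonoidAlgebra.coeff_neg, Finsupp.neg_apply]
    exact neg_mem (mul_coeff_mem _ y v hv g)
  exact Ideal.mem_span_singleton'.mp h1

lemma isUnit_one_add [Finite G] (v : MonoidAlgebra R G)
    (hv : ∀ g, v.coeff g ∈ Ideal.jacobson (⊥ : Ideal R)) :
    IsUnit (1 + v) := by
  obtain ⟨z, hz⟩ := exists_left_inv_one_add v hv
  have hzv : ∀ g, (-(z * v)).coeff g ∈ Ideal.jacobson (⊥ : Ideal R) := by
    intro g
    rw [MonoidAlgebra.coeff_neg, Finsupp.neg_apply]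
    exact neg_mem (mul_coeff_mem _ z v hv g)
  obtain ⟨z₂, hz₂⟩ := exists_left_inv_one_add _ hzv
  have hzz : 1 + -(z * v) = z := by
    have h2 : z * (1 + v) = z + z * v := by noncomm_ring
    rw [h2] at hz
    rw [← hz]
    abel
  rw [hzz] at hz₂
  have h1 : (1 + v) = z₂ := by
    calc 1 + v = 1 * (1 + v) := (one_mul _).symm
    _ = (z₂ * z) * (1 + v) := by rw [hz₂]
    _ = z₂ * (z * (1 + v)) := by rw [mul_assoc]
    _ = z₂ := by rw [hz, mul_one]
  exact ⟨⟨1 + v, z, by rw [h1]; exact hz₂, hz⟩, rfl⟩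

/-- The easy direction: elements with all coefficients in `J(R)` lie in `J(RG)`. -/
lemma mem_jacobson_of_coeffs [Finite G] (x : MonoidAlgebra R G)
    (hx : ∀ g, x.coeff g ∈ Ideal.jacobson (⊥ : Ideal R)) :
    x ∈ Ideal.jacobson (⊥ : Ideal (MonoidAlgebra R G)) := by
  rw [Ideal.mem_jacobson_iff]
  intro y
  have hv : ∀ g, (y * x).coeff g ∈ Ideal.jacobson (⊥ : Ideal R) :=
    fun g => mul_coeff_mem _ y x hx g
  obtain ⟨u, hu⟩ := isUnit_one_add _ hv
  refine ⟨(u⁻¹ : _ˣ), ?_⟩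
  rw [Ideal.mem_bot, sub_eq_zero, mul_assoc]
  calc (u⁻¹ : _ˣ) * (y * x) + (u⁻¹ : _ˣ) = (u⁻¹ : _ˣ) * (1 + y * x) := by noncomm_ring
  _ = 1 := by rw [← hu, Units.inv_mul]

/-- `x • t = 0` for `x` in the Jacobson radical and `t` in a simple module. -/
lemma smul_eq_zero_of_mem_jacobson {Λ : Type*} [Ring Λ] {x : Λ}
    (hx : x ∈ Ideal.jacobson (⊥ : Ideal Λ)) {T : Type*} [AddCommGroup T] [Module Λ T]
    [IsSimpleModule Λ T] (t : T) : x • t = 0 := by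
  rcases eq_or_ne t 0 with rfl | ht
  · simp
  have hmax := IsSimpleModule.ker_toSpanSingleton_isMaximal Λ (m := t) ht
  have hx' : x ∈ LinearMap.ker (LinearMap.toSpanSingleton Λ T t) := by
    rw [Ideal.jacobson] at hx
    exact Submodule.mem_sInf.mp hx _ ⟨bot_le, hmax⟩
  simpa using hx'

section Hard

/-- The ideal of elements of `RG` all of whose coefficients lie in `m`. -/
def coeffIdeal (m : Ideal R) : Ideal (MonoidAlgebra R G) where
  carrier := {y | ∀ g, y.coeff g ∈ m}
  add_mem' {y z} hy hz := fun g => by rw [MonoidAlgebra.coeff_add, Finsupp.add_apply]; exact add_mem (hy g) (hz g)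
  zero_mem' := fun g => by rw [MonoidAlgebra.coeff_zero, Finsupp.zero_apply]; exact zero_mem m
  smul_mem' c {y} hy := fun g => by rw [smul_eq_mul]; exact mul_coeff_mem m c y hy g

lemma mem_coeffIdeal {m : Ideal R} {y : MonoidAlgebra R G} :
    y ∈ coeffIdeal m ↔ ∀ g, y.coeff g ∈ m := Iff.rfl

variable (m : Ideal R)

local notation "QW" => MonoidAlgebra R G ⧸ coeffIdeal (G := G) m

lemma qw_smul_mk (r : R) (y : MonoidAlgebra R G) :
    r • (Submodule.Quotient.mk y : QW) = Submodule.Quotient.mk (r • y) :=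
  (Submodule.Quotient.mk_smul _ r y).symm

lemma qw_single_one_smul (r : R) (w : QW) :
    (MonoidAlgebra.single (1 : G) r : MonoidAlgebra R G) • w = r • w := by
  obtain ⟨y, rfl⟩ := Submodule.Quotient.mk_surjective _ w
  rw [qw_smul_mk]
  show Submodule.Quotient.mk (MonoidAlgebra.single (1 : G) r * y) = _
  congr 1
  ext h
  rw [MonoidAlgebra.single_one_mul_apply, MonoidAlgebra.coeff_smul_apply, smul_eq_mul]

lemma qw_single_smul (g : G) (r : R) (w : QW) :
    (MonoidAlgebra.single g r : MonoidAlgebra R G) • w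
      = r • ((MonoidAlgebra.single g (1 : R) : MonoidAlgebra R G) • w) := by
  rw [← qw_single_one_smul m r, ← mul_smul, MonoidAlgebra.single_mul_single, one_mul, mul_one]

/-- The `R`-linear action of a group element on `QW`. -/
noncomputable def rho (g : G) : QW →ₗ[R] QW where
  toFun w := (MonoidAlgebra.single g (1 : R) : MonoidAlgebra R G) • w
  map_add' w₁ w₂ := smul_add _ _ _
  map_smul' r w := by
    dsimp only [RingHom.id_apply]
    rw [← qw_single_one_smul m r w, ← qw_single_one_smul m r, ← mul_smul, ← mul_smul,
      MonoidAlgebra.single_mul_single, MonoidAlgebra.single_mul_single,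
      one_mul, mul_one, one_mul, mul_one]

lemma rho_apply (g : G) (w : QW) :
    rho m g w = (MonoidAlgebra.single g (1 : R) : MonoidAlgebra R G) • w := rfl

lemma isSemisimple_qw_over_R (hm : m.IsMaximal) : IsSemisimpleModule R QW := by
  classical
  set wgen : G → QW := fun g => Submodule.Quotient.mk (MonoidAlgebra.single g (1 : R))
    with hwgen
  set p : G → Submodule R QW :=
    fun g => LinearMap.range (LinearMap.toSpanSingleton R QW (wgen g)) with hp
  have happ : ∀ (g : G) (r : R), LinearMap.toSpanSingleton R QW (wgen g) r
      = Submodule.Quotient.mk (MonoidAlgebra.single g r) := by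
    intro g r
    rw [LinearMap.toSpanSingleton_apply, hwgen, qw_smul_mk]
    congr 1
    rw [MonoidAlgebra.smul_single, smul_eq_mul, mul_one]
  have hker : ∀ g : G, LinearMap.ker (LinearMap.toSpanSingleton R QW (wgen g)) = m := by
    intro g
    ext r
    rw [LinearMap.mem_ker, happ, Submodule.Quotient.mk_eq_zero]
    constructor
    · intro h
      have := h g
      rwa [MonoidAlgebra.coeff_single, Finsupp.single_eq_same] at this
    · intro hr h
      by_cases hhg : h = g
      · subst hhg; rwa [MonoidAlgebra.coeff_single, Finsupp.single_eq_same]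
      · rw [MonoidAlgebra.coeff_single, Finsupp.single_eq_of_ne' (Ne.symm hhg)]; exact zero_mem m
  have hsimple : ∀ g : G, IsSimpleModule R ↥(p g) := by
    intro g
    have h1 : IsSimpleModule R (R ⧸ m) :=
      isSimpleModule_iff_isCoatom.mpr (Ideal.isMaximal_def.mp hm)
    have h2 : IsSimpleModule R
        (R ⧸ LinearMap.ker (LinearMap.toSpanSingleton R QW (wgen g))) := by
      rw [hker g]; exact h1
    exact IsSimpleModule.congr (LinearMap.quotKerEquivRange _).symm
  have hsup : ⨆ g, p g = ⊤ := by
    rw [eq_top_iff]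
    rintro w -
    obtain ⟨y, rfl⟩ := Submodule.Quotient.mk_surjective _ w
    induction y using MonoidAlgebra.induction with
    | zero =>
      rw [show (Submodule.Quotient.mk (0 : MonoidAlgebra R G) : QW) = 0 from rfl]
      exact Submodule.zero_mem _
    | single_add g' r f _ _ ih =>
      rw [Submodule.Quotient.mk_add]
      exact add_mem (Submodule.mem_iSup_of_mem g' ⟨r, (happ g' r)⟩) ih
  exact isSemisimpleModule_of_isSemisimpleModule_submodule'
    (fun g => letI := hsimple g; inferInstance) hsup

lemma isSemisimple_qw [Finite G] (hG : IsUnit ((Nat.card G : R))) (hm : m.IsMaximal) :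
    IsSemisimpleModule (MonoidAlgebra R G) QW := by
  classical
  cases nonempty_fintype G
  haveI hss : IsSemisimpleModule R QW := isSemisimple_qw_over_R m hm
  set c : R := ((hG.unit⁻¹ : Rˣ) : R) with hc_def
  have hcn : c * (Nat.card G : R) = 1 := by
    have h2 : ((hG.unit⁻¹ : Rˣ) : R) * ((hG.unit : Rˣ) : R) = 1 := Units.inv_mul _
    rw [IsUnit.unit_spec] at h2
    exact hc_def ▸ h2
  have hc : ∀ r : R, Commute c r := by
    intro r
    have h1 : Commute (↑hG.unit : R) r := by
      rw [IsUnit.unit_spec]; exact Nat.cast_commute _ r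
    exact Commute.units_inv_left h1
  refine (isSemisimpleModule_iff ..).mpr ⟨?_⟩
  intro P
  have hPr : ∀ (r : R) (w : QW), w ∈ P → r • w ∈ P := fun r w hw => by
    rw [← qw_single_one_smul m r w]; exact P.smul_mem _ hw
  obtain ⟨Q', hQ'⟩ := exists_isCompl (P.restrictScalars R)
  set π : QW →ₗ[R] QW :=
    (P.restrictScalars R).subtype ∘ₗ ((P.restrictScalars R).linearProjOfIsCompl Q' hQ')
    with hπ_def
  have hπP : ∀ w, π w ∈ P := fun w =>
    ((P.restrictScalars R).linearProjOfIsCompl Q' hQ' w).2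
  have hπfix : ∀ w ∈ P, π w = w := by
    intro w hw
    have h2 := Submodule.linearProjOfIsCompl_apply_left hQ'
      (⟨w, hw⟩ : P.restrictScalars R)
    show ((P.restrictScalars R).linearProjOfIsCompl Q' hQ' w : QW) = w
    exact congrArg Subtype.val h2
  set F : QW →ₗ[R] QW := ∑ g : G, (rho m g⁻¹) ∘ₗ π ∘ₗ (rho m g) with hF_def
  have hFapp : ∀ w, F w = ∑ g : G, (rho m g⁻¹) (π (rho m g w)) := by
    intro w
    rw [hF_def]
    simp only [LinearMap.sum_apply, LinearMap.comp_apply]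
  have hFP : ∀ w, F w ∈ P := by
    intro w
    rw [hFapp]
    refine Submodule.sum_mem _ fun g _ => ?_
    rw [rho_apply]
    exact P.smul_mem _ (hπP _)
  have hFfix : ∀ w ∈ P, c • F w = w := by
    intro w hw
    have hterm : ∀ g : G, (rho m g⁻¹) (π (rho m g w)) = w := by
      intro g
      have h1 : rho m g w ∈ P := by rw [rho_apply]; exact P.smul_mem _ hw
      rw [hπfix _ h1, rho_apply, rho_apply, ← mul_smul,
        MonoidAlgebra.single_mul_single, inv_mul_cancel, mul_one,
        ← MonoidAlgebra.one_def, one_smul]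
    rw [hFapp, Finset.sum_congr rfl (fun g _ => hterm g), Finset.sum_const,
      Finset.card_univ, ← Nat.cast_smul_eq_nsmul R, smul_smul,
      ← Nat.card_eq_fintype_card, hcn, one_smul]
  have hswap : ∀ (g' : G) (r : R) (z : QW),
      c • ((MonoidAlgebra.single g' r : MonoidAlgebra R G) • z)
        = (MonoidAlgebra.single g' r : MonoidAlgebra R G) • (c • z) := by
    intro g' r z
    rw [← qw_single_one_smul m c, ← qw_single_one_smul m c z, ← mul_smul, ← mul_smul,
      MonoidAlgebra.single_mul_single, MonoidAlgebra.single_mul_single,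
      one_mul, mul_one, (hc r).eq]
  have hFsingle : ∀ (h : G) (r : R) (w : QW),
      F ((MonoidAlgebra.single h r : MonoidAlgebra R G) • w)
        = (MonoidAlgebra.single h r : MonoidAlgebra R G) • F w := by
    intro h r w
    have step : ∀ g : G, (rho m g⁻¹) (π (rho m g ((MonoidAlgebra.single h r : MonoidAlgebra R G) • w)))
        = r • ((MonoidAlgebra.single h (1:R) : MonoidAlgebra R G)
            • ((rho m (g*h)⁻¹) (π (rho m (g*h) w)))) := by
      intro g
      have e1 : rho m g ((MonoidAlgebra.single h r : MonoidAlgebra R G) • w)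
          = r • rho m (g*h) w := by
        rw [rho_apply, ← mul_smul, MonoidAlgebra.single_mul_single, one_mul, qw_single_smul]
        rfl
      rw [e1, map_smul, map_smul]
      congr 1
      simp only [rho_apply]
      rw [← mul_smul, MonoidAlgebra.single_mul_single, mul_one,
        mul_inv_rev, mul_inv_cancel_left]
    calc F ((MonoidAlgebra.single h r : MonoidAlgebra R G) • w)
        = ∑ g : G, (rho m g⁻¹) (π (rho m g ((MonoidAlgebra.single h r : MonoidAlgebra R G) • w))) :=
          hFapp _
      _ = ∑ g : G, r • ((MonoidAlgebra.single h (1:R) : MonoidAlgebra R G)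
            • ((rho m (g*h)⁻¹) (π (rho m (g*h) w)))) :=
          Finset.sum_congr rfl fun g _ => step g
      _ = ∑ g : G, r • ((MonoidAlgebra.single h (1:R) : MonoidAlgebra R G)
            • ((rho m g⁻¹) (π (rho m g w)))) :=
          Fintype.sum_equiv (Equiv.mulRight h)
            (fun g => r • ((MonoidAlgebra.single h (1:R) : MonoidAlgebra R G)
              • ((rho m (g*h)⁻¹) (π (rho m (g*h) w)))))
            (fun g => r • ((MonoidAlgebra.single h (1:R) : MonoidAlgebra R G)
              • ((rho m g⁻¹) (π (rho m g w)))))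
            (fun g => by rw [Equiv.coe_mulRight])
      _ = r • ((MonoidAlgebra.single h (1:R) : MonoidAlgebra R G)
            • ∑ g : G, (rho m g⁻¹) (π (rho m g w))) := by
          rw [← Finset.smul_sum, ← Finset.smul_sum]
      _ = (MonoidAlgebra.single h r : MonoidAlgebra R G) • F w := by
          rw [← qw_single_smul, hFapp]
  have hFequi : ∀ (y : MonoidAlgebra R G) (w : QW), c • F (y • w) = y • (c • F w) := by
    intro y w
    induction y using MonoidAlgebra.induction with
    | zero =>
      rw [zero_smul, map_zero, smul_zero, zero_smul]
    | single_add g' r f _ _ ih =>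
      rw [add_smul, map_add, smul_add, hFsingle, hswap, ih, add_smul]
  refine ⟨{ carrier := {w | c • F w = 0}
            add_mem' := fun {w₁ w₂} h1 h2 => by
              show c • F (w₁ + w₂) = 0
              rw [map_add, smul_add, h1, h2, add_zero]
            zero_mem' := by show c • F 0 = 0; rw [map_zero, smul_zero]
            smul_mem' := fun y {w} hw => by
              show c • F (y • w) = 0
              rw [hFequi, hw, smul_zero] }, ?_⟩
  refine IsCompl.of_eq ?_ ?_
  · rw [eq_bot_iff]
    rintro w ⟨hwP, hwK⟩
    have : c • F w = 0 := hwK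
    rw [hFfix w hwP] at this
    exact this
  · rw [eq_top_iff]
    rintro w -
    rw [Submodule.mem_sup]
    refine ⟨c • F w, hPr c _ (hFP w), w - c • F w, ?_, by abel⟩
    show c • F (w - c • F w) = 0
    rw [map_sub, smul_sub, hFfix _ (hPr c _ (hFP w)), sub_self]

/-- The hard direction, per maximal left ideal. -/
lemma coeff_mem_of_mem_jacobson [Finite G] (hG : IsUnit ((Nat.card G : R)))
    (hm : m.IsMaximal) (x : MonoidAlgebra R G)
    (hx : x ∈ Ideal.jacobson (⊥ : Ideal (MonoidAlgebra R G))) :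
    ∀ g : G, x.coeff g ∈ m := by
  classical
  haveI hss := isSemisimple_qw m hG hm
  have htop := IsSemisimpleModule.sSup_simples_eq_top (MonoidAlgebra R G) QW
  have hzero : ∀ w : QW, x • w = 0 := by
    intro w
    have hw : w ∈ sSup {p : Submodule (MonoidAlgebra R G) QW | IsSimpleModule _ p} :=
      htop ▸ Submodule.mem_top
    rw [sSup_eq_iSup'] at hw
    refine Submodule.iSup_induction _ (motive := fun w => x • w = 0) hw ?_ (smul_zero x) ?_
    · rintro ⟨S, hS⟩ w hwS
      haveI : IsSimpleModule (MonoidAlgebra R G) ↥S := hS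
      have h0 : x • (⟨w, hwS⟩ : S) = 0 := smul_eq_zero_of_mem_jacobson hx (T := ↥S) _
      have := congrArg Subtype.val h0
      simpa using this
    · intro w₁ w₂ h1 h2
      rw [smul_add, h1, h2, add_zero]
  have h0 := hzero (Submodule.Quotient.mk 1)
  rw [show (x • (Submodule.Quotient.mk (1 : MonoidAlgebra R G) : QW))
      = Submodule.Quotient.mk (x * 1) from rfl, mul_one,
    Submodule.Quotient.mk_eq_zero] at h0
  exact h0

end Hard
end GroupRing
end JGRAux

/-- For `R` an artinian ring and `G` a finite group with `|G|·1` a unit of `R`,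
the Jacobson radical of the group ring `RG` consists exactly of those elements
all of whose coefficients lie in `J(R)` (i.e. it equals `J(R)G`, the kernel of
the coefficientwise surjection `RG → (R/J(R))G`). -/
theorem jacobson_groupRing_eq_radical_coeffs (R : Type*) [Ring R]
    (hart : IsArtinianRing R) (hartop : IsArtinianRing Rᵐᵒᵖ)
    (G : Type*) [Group G] [Finite G] (hG : IsUnit ((Nat.card G : R))) :
    ∀ x : MonoidAlgebra R G,
      x ∈ jacobsonRad (MonoidAlgebra R G) ↔ ∀ g : G, x.coeff g ∈ jacobsonRad R := by
  intro x
  constructor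
  · intro hx g
    have h : x.coeff g ∈ Ideal.jacobson (⊥ : Ideal R) := by
      rw [Ideal.jacobson]
      refine Submodule.mem_sInf.mpr ?_
      rintro m ⟨-, hmax⟩
      exact JGRAux.coeff_mem_of_mem_jacobson m hG hmax x hx g
    exact h
  · intro hx
    exact JGRAux.mem_jacobson_of_coeffs x hx
end

section
/- Let D be a division ring, let n ≥ 1, and let φ be a ring automorphism of the matrix ring M_n(D). Then there exist an invertible matrix U ∈ M_n(D) and a ring automorphism σ of D such that φ(A) = U · σ(A) · U⁻¹ for every A ∈ M_n(D), where σ(A) denotes the matrix obtained by applying σ to each entry of A. -/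
open Function

universe u v

open Matrix MulOpposite

section AuxSN
variable {D : Type*} [DivisionRing D] {n : ℕ}

private def mopLin (M : Matrix (Fin n) (Fin n) D) :
    (Fin n → D) →ₗ[Dᵐᵒᵖ] (Fin n → D) where
  toFun := M.mulVec
  map_add' v w := M.mulVec_add v w
  map_smul' c v := by
    funext i
    simp only [Matrix.mulVec, dotProduct, RingHom.id_apply, Pi.smul_apply,
      MulOpposite.smul_eq_mul_unop, Finset.sum_mul]
    exact Finset.sum_congr rfl fun j _ => (mul_assoc _ _ _).symm

private theorem finite_op : Module.Finite Dᵐᵒᵖ D := by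
  have : Function.Surjective
      (({ toFun := unop, map_add' := fun a b => rfl,
          map_smul' := fun c x => by
            simp [MulOpposite.smul_eq_mul_unop, smul_eq_mul] } : Dᵐᵒᵖ →ₗ[Dᵐᵒᵖ] D)) :=
    fun d => ⟨op d, rfl⟩
  exact Module.Finite.of_surjective _ this

private theorem exists_right_inv (M : Matrix (Fin n) (Fin n) D)
    (h : ∀ w, M.mulVec w = 0 → w = 0) : ∃ N, M * N = 1 := by
  haveI := finite_op (D := D)
  haveI : Module.Finite Dᵐᵒᵖ (Fin n → D) := Module.Finite.pi
  have hinj : Function.Injective (mopLin M) := by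
    intro a b hab
    have h0 : mopLin M (a - b) = 0 := by rw [map_sub, hab, sub_self]
    exact sub_eq_zero.mp (h (a - b) h0)
  have hsurj := (LinearMap.injective_iff_surjective).mp hinj
  choose g hg using hsurj
  refine ⟨Matrix.of fun i k => g (Pi.single k 1) i, ?_⟩
  ext i k
  have h1 : M.mulVec (fun j => g (Pi.single k 1) j) = Pi.single k 1 := hg (Pi.single k 1)
  have h2 : (M * Matrix.of fun i k => g (Pi.single k 1) i) i k
      = M.mulVec (fun j => g (Pi.single k 1) j) i := by
    simp [Matrix.mul_apply, Matrix.mulVec, dotProduct]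
  rw [h2, h1]
  simp [Matrix.one_apply, Pi.single_apply]

private theorem exists_inv (M : Matrix (Fin n) (Fin n) D)
    (h : ∀ w, M.mulVec w = 0 → w = 0) : ∃ N, M * N = 1 ∧ N * M = 1 := by
  obtain ⟨N, hMN⟩ := exists_right_inv M h
  have hNinj : ∀ w, N.mulVec w = 0 → w = 0 := by
    intro w hw
    have : M.mulVec (N.mulVec w) = w := by
      rw [Matrix.mulVec_mulVec, hMN, Matrix.one_mulVec]
    rw [hw, Matrix.mulVec_zero] at this
    exact this.symm
  obtain ⟨W, hNW⟩ := exists_right_inv N hNinj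
  have hWM : W = M := by
    calc W = 1 * W := (one_mul W).symm
    _ = M * N * W := by rw [hMN]
    _ = M * (N * W) := mul_assoc _ _ _
    _ = M := by rw [hNW, mul_one]
  exact ⟨N, hMN, by rw [← hWM, hNW]⟩

private theorem sandwich_zz (z : Fin n) (M : Matrix (Fin n) (Fin n) D) :
    Matrix.single z z (1:D) * M * Matrix.single z z 1 = Matrix.single z z (M z z) := by
  ext i j
  simp only [Matrix.mul_apply, Matrix.single, Matrix.of_apply, ite_and,
    Finset.sum_ite_eq, Finset.mem_univ, if_true, ite_mul, mul_ite, one_mul, mul_one,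
    zero_mul, mul_zero, Finset.sum_ite_eq', Finset.sum_const_zero]
  split_ifs <;> simp_all

end AuxSN

/-- Every ring automorphism of `M_n(D)`, `D` a division ring, is the composite
of an inner automorphism (by an invertible matrix `U`, with inverse `V`) and a
ring automorphism of `D` applied entrywise. -/
theorem matrix_ring_automorphism_inner_comp_entrywise (D : Type*) [DivisionRing D]
    (n : ℕ) (hn : 1 ≤ n)
    (φ : Matrix (Fin n) (Fin n) D ≃+* Matrix (Fin n) (Fin n) D) :
    ∃ (U V : Matrix (Fin n) (Fin n) D) (σ : D ≃+* D),
      U * V = 1 ∧ V * U = 1 ∧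
      ∀ A : Matrix (Fin n) (Fin n) D, φ A = U * A.map σ * V := by
  classical
  set z : Fin n := ⟨0, hn⟩ with hz
  set E : Fin n → Fin n → Matrix (Fin n) (Fin n) D :=
    fun i j => Matrix.single i j 1 with hE
  set f : Fin n → Fin n → Matrix (Fin n) (Fin n) D := fun i j => φ (E i j) with hf
  have fmul : ∀ i j k l, f i j * f k l = if j = k then f i l else 0 := by
    intro i j k l
    rw [hf]; dsimp only
    rw [← map_mul φ]
    by_cases h : j = k
    · subst h; rw [if_pos rfl, hE]; dsimp only
      rw [Matrix.single_mul_single_same, one_mul]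
    · rw [if_neg h, hE]; dsimp only
      rw [Matrix.single_mul_single_of_ne (h := h), map_zero]
  have hfzz : f z z ≠ 0 := by
    intro h0
    have hEz : E z z = 0 := by
      apply φ.injective; rw [map_zero]; exact h0
    have h1 : (E z z) z z = 1 := Matrix.single_apply_same z z 1
    rw [hEz] at h1
    simp at h1
  obtain ⟨a, b, hab⟩ : ∃ a b, f z z a b ≠ 0 := by
    by_contra h; push_neg at h
    exact hfzz (by ext i j; simpa using h i j)
  set v' : Fin n → D := (f z z).mulVec (Pi.single b 1) with hv'def
  have hv'a : v' a ≠ 0 := by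
    rw [hv'def, Matrix.mulVec_single]
    simpa using hab
  have hfv' : (f z z).mulVec v' = v' := by
    rw [hv'def, Matrix.mulVec_mulVec, fmul, if_pos rfl]
  set u : Fin n → Fin n → D := fun k => (f k z).mulVec v' with hu
  have huz : u z = v' := by rw [hu]; dsimp only; exact hfv'
  set U : Matrix (Fin n) (Fin n) D := Matrix.of (fun i k => u k i) with hU
  have key : ∀ i j, f i j * U = U * E i j := by
    intro i j
    ext l k
    have lhs : (f i j * U) l k = ((f i j).mulVec (u k)) l := by
      simp [Matrix.mul_apply, Matrix.mulVec, dotProduct, hU]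
    have lhs2 : (f i j).mulVec (u k) = if j = k then u i else 0 := by
      rw [hu]; dsimp only
      rw [Matrix.mulVec_mulVec, fmul]
      split_ifs
      · rfl
      · rw [Matrix.zero_mulVec]
    have rhs : (U * E i j) l k = if j = k then u i l else 0 := by
      rw [hE]; dsimp only
      rw [Matrix.mul_apply]
      simp only [Matrix.single, Matrix.of_apply, ite_and, mul_ite, mul_one, mul_zero]
      rw [Finset.sum_ite_eq]
      simp [hU]
    rw [lhs, lhs2, rhs]
    split_ifs <;> simp
  have hUinj : ∀ w, U.mulVec w = 0 → w = 0 := by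
    intro w hw
    funext k
    have h1 : U.mulVec ((E z k).mulVec w) = 0 := by
      rw [Matrix.mulVec_mulVec, ← key, ← Matrix.mulVec_mulVec, hw, Matrix.mulVec_zero]
    have h2 : (E z k).mulVec w = Pi.single z (w k) := by
      funext i
      rw [hE]; dsimp only
      simp only [Matrix.mulVec, dotProduct, Matrix.single, Matrix.of_apply, ite_and,
        ite_mul, one_mul, zero_mul]
      by_cases hzi : z = i
      · subst hzi
        simp [Finset.sum_ite_eq, Pi.single_apply]
      · simp only [if_neg hzi, Finset.sum_const_zero, Pi.single_apply]
        rw [if_neg (fun h => hzi h.symm)]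
    rw [h2] at h1
    have h3 : U.mulVec (Pi.single z (w k)) a = u z a * w k := by
      rw [Matrix.mulVec_single]; simp [hU]
    rw [h1] at h3
    rw [huz] at h3
    rcases mul_eq_zero.mp h3.symm with h | h
    · exact absurd h hv'a
    · exact h
  obtain ⟨V, hUV, hVU⟩ := exists_inv U hUinj
  have canUV : ∀ X : Matrix (Fin n) (Fin n) D, U * (V * X) = X := by
    intro X; rw [← mul_assoc, hUV, one_mul]
  have canVU : ∀ X : Matrix (Fin n) (Fin n) D, V * (U * X) = X := by
    intro X; rw [← mul_assoc, hVU, one_mul]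
  have hfUV : ∀ i j, f i j = U * E i j * V := by
    intro i j
    calc f i j = f i j * (U * V) := by rw [hUV, mul_one]
    _ = (f i j * U) * V := by rw [mul_assoc]
    _ = U * E i j * V := by rw [key]
  have ezz : φ (E z z) = U * E z z * V := hfUV z z
  set σ0 : D → D := fun d => (V * φ (Matrix.single z z d) * U) z z with hσ0
  have hb : ∀ d : D, Matrix.single z z d = E z z * Matrix.single z z d * E z z := by
    intro d
    rw [hE]; dsimp only
    rw [Matrix.single_mul_single_same, Matrix.single_mul_single_same, one_mul, mul_one]
  have hsand : ∀ d, V * φ (Matrix.single z z d) * U = Matrix.single z z (σ0 d) := by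
    intro d
    have h3 : V * φ (Matrix.single z z d) * U
        = E z z * (V * φ (Matrix.single z z d) * U) * E z z := by
      conv_lhs => rw [hb d, map_mul φ, map_mul φ, ezz]
      simp only [mul_assoc, canUV, canVU, hUV, hVU, mul_one]
    rw [h3]
    have h4 := sandwich_zz (D := D) z (V * φ (Matrix.single z z d) * U)
    rw [hE]; dsimp only
    rw [h4]
  have hgen : ∀ i j d, V * φ (Matrix.single i j d) * U = Matrix.single i j (σ0 d) := by
    intro i j d
    have h1 : Matrix.single i j d = E i z * Matrix.single z z d * E z j := by
      rw [hE]; dsimp only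
      rw [Matrix.single_mul_single_same, Matrix.single_mul_single_same, one_mul, mul_one]
    have h2 : φ (E i z) = U * E i z * V := hfUV i z
    have h3 : φ (E z j) = U * E z j * V := hfUV z j
    rw [h1, map_mul φ, map_mul φ, h2, h3]
    have h4 : V * (U * E i z * V * φ (Matrix.single z z d) * (U * E z j * V)) * U
        = E i z * (V * φ (Matrix.single z z d) * U) * E z j := by
      simp only [mul_assoc, canUV, canVU, hVU, hUV, mul_one]
    rw [h4, hsand, hE]; dsimp only
    rw [Matrix.single_mul_single_same, Matrix.single_mul_single_same, one_mul, mul_one]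
  -- σ0 is additive and multiplicative
  have hadd : ∀ d e : D, σ0 (d + e) = σ0 d + σ0 e := by
    intro d e
    have h2 : Matrix.single z z (σ0 (d + e))
        = Matrix.single z z (σ0 d) + Matrix.single z z (σ0 e) := by
      rw [← hsand, ← hsand, ← hsand, Matrix.single_add, map_add, mul_add, add_mul]
    have := congrArg (fun M => M z z) h2
    simpa [Matrix.single_apply_same, Matrix.add_apply] using this
  have hmul : ∀ d e : D, σ0 (d * e) = σ0 d * σ0 e := by
    intro d e
    have h2 : Matrix.single z z (σ0 (d * e))
        = Matrix.single z z (σ0 d * σ0 e) := by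
      rw [← Matrix.single_mul_single_same (σ0 d) z z z (σ0 e)]
      rw [← hsand, ← hsand, ← hsand]
      rw [show Matrix.single z z (d * e)
          = Matrix.single z z d * Matrix.single z z e from
        (Matrix.single_mul_single_same d z z z e).symm]
      rw [map_mul φ]
      simp only [mul_assoc, canUV, canVU]
    have := congrArg (fun M => M z z) h2
    simpa [Matrix.single_apply_same] using this
  -- definition of the inverse map
  set τ0 : D → D := fun d => (φ.symm (U * Matrix.single z z d * V)) z z with hτ0
  have hsymm_sand : ∀ d, φ.symm (U * Matrix.single z z d * V)
      = Matrix.single z z (τ0 d) := by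
    intro d
    have h1 : U * Matrix.single z z d * V
        = φ (E z z) * (U * Matrix.single z z d * V) * φ (E z z) := by
      conv_lhs => rw [hb d]
      rw [ezz]
      simp only [mul_assoc, canUV, canVU]
    have h5 : φ.symm (U * Matrix.single z z d * V)
        = E z z * φ.symm (U * Matrix.single z z d * V) * E z z := by
      conv_lhs => rw [h1]
      rw [map_mul φ.symm, map_mul φ.symm, RingEquiv.symm_apply_apply]
    rw [h5]
    have h4 := sandwich_zz (D := D) z (φ.symm (U * Matrix.single z z d * V))
    rw [hE]; dsimp only
    rw [h4]
  have hleft : ∀ d : D, τ0 (σ0 d) = d := by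
    intro d
    have h1 : φ.symm (U * Matrix.single z z (σ0 d) * V) = Matrix.single z z d := by
      rw [← hsand d]
      have h2 : U * (V * φ (Matrix.single z z d) * U) * V = φ (Matrix.single z z d) := by
        simp only [mul_assoc, canUV, canVU, hUV, mul_one]
      rw [h2, RingEquiv.symm_apply_apply]
    have h2 := hsymm_sand (σ0 d)
    rw [h1] at h2
    have := congrArg (fun M => M z z) h2
    simpa [Matrix.single_apply_same] using this.symm
  have hright : ∀ d : D, σ0 (τ0 d) = d := by
    intro d
    have h1 : V * φ (Matrix.single z z (τ0 d)) * U = Matrix.single z z d := by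
      rw [← hsymm_sand d, RingEquiv.apply_symm_apply]
      simp only [mul_assoc, canVU, canUV, hVU, mul_one]
    have h2 := hsand (τ0 d)
    rw [h1] at h2
    have := congrArg (fun M => M z z) h2
    simpa [Matrix.single_apply_same] using this.symm
  set σ : D ≃+* D :=
    { toFun := σ0, invFun := τ0, left_inv := hleft, right_inv := hright,
      map_add' := hadd, map_mul' := hmul } with hσ
  refine ⟨U, V, σ, hUV, hVU, ?_⟩
  intro A
  have hmap : A.map σ0 = V * φ A * U := by
    have h1 : A.map σ0 = ∑ i, ∑ j, Matrix.single i j (σ0 (A i j)) := by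
      conv_lhs => rw [Matrix.matrix_eq_sum_single (A.map σ0)]
      simp only [Matrix.map_apply]
    rw [h1]
    have h2 : ∑ i, ∑ j, Matrix.single i j (σ0 (A i j))
        = ∑ i, ∑ j, V * φ (Matrix.single i j (A i j)) * U := by
      refine Finset.sum_congr rfl fun i _ => Finset.sum_congr rfl fun j _ => ?_
      exact (hgen i j (A i j)).symm
    rw [h2]
    have h3 : ∑ i, ∑ j, V * φ (Matrix.single i j (A i j)) * U
        = V * (∑ i, ∑ j, φ (Matrix.single i j (A i j))) * U := by
      simp only [Finset.mul_sum, Finset.sum_mul]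
    have h4 : ∑ i : Fin n, ∑ j : Fin n, φ (Matrix.single i j (A i j)) = φ A := by
      rw [show ∑ i : Fin n, ∑ j : Fin n, φ (Matrix.single i j (A i j))
          = φ (∑ i : Fin n, ∑ j : Fin n, Matrix.single i j (A i j)) from by
        rw [map_sum φ]
        exact Finset.sum_congr rfl fun i _ => (map_sum φ _ _).symm]
      rw [← Matrix.matrix_eq_sum_single A]
    rw [h3, h4]
  have hAσ : A.map σ = A.map σ0 := rfl
  rw [hAσ, hmap]
  simp only [mul_assoc, canUV, canVU, hUV, mul_one]
end

section
/- Let π be a nonempty finite set of primes and let G be a group. Then G is finite π'-by-cyclic π if and only if for every p ∈ π, G is finite p'-by-cyclic p. -/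
open Function

universe u v

private theorem auxFBPC_prod_dvd {ι : Type*} (s : Finset ι) (f : ι → ℕ) (N : ℕ)
    (hco : Set.Pairwise ↑s (Nat.Coprime on f)) (hd : ∀ i ∈ s, f i ∣ N) :
    (∏ i ∈ s, f i) ∣ N := by
  classical
  induction s using Finset.induction_on with
  | empty => simpa using Nat.one_dvd N
  | @insert a s ha ih =>
    rw [Finset.prod_insert ha]
    have hco' : Set.Pairwise ↑s (Nat.Coprime on f) :=
      hco.mono (by intro x hx; simp [hx])
    have h1 : Nat.Coprime (f a) (∏ i ∈ s, f i) := by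
      apply Nat.Coprime.prod_right
      intro i hi
      exact hco (by simp) (by simp [hi]) (by rintro rfl; exact ha hi)
    exact h1.mul_dvd_of_dvd_of_dvd (hd a (by simp)) (ih hco' (fun i hi => hd i (by simp [hi])))

private theorem auxFBPC_card_of_surj {G M : Type*} [Group G] [Group M] (φ : G →* M)
    (hs : Function.Surjective φ) : Nat.card G = Nat.card M * Nat.card φ.ker := by
  rw [Subgroup.card_eq_card_quotient_mul_card_subgroup φ.ker,
    Nat.card_congr (QuotientGroup.quotientKerEquivOfSurjective φ hs).toEquiv]

/-- For a nonempty finite set of primes `π`, a group `G` is finite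
`π'`-by-cyclic `π` iff it is finite `p'`-by-cyclic `p` for every `p ∈ π`. -/
theorem finitePrimeToPiByCyclicPi_iff (π : Set ℕ) (hfin : π.Finite)
    (hne : π.Nonempty) (hprime : ∀ p ∈ π, Nat.Prime p)
    (G : Type*) [Group G] :
    IsFinitePrimeToPiByCyclicPi π G ↔ ∀ p ∈ π, IsFinitePrimeToPByCyclicP p G := by
  have hcm : ∀ m : ℕ, Nat.card (Multiplicative (ZMod m)) = m := fun m => by
    rw [Nat.card_congr Multiplicative.toAdd, Nat.card_zmod]
  constructor
  · rintro ⟨n, φ, hn, hdvd, hsurj, hker, hcop⟩ p hp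
    have pp := hprime p hp
    haveI : NeZero n := ⟨hn.ne'⟩
    haveI : Finite (G ⧸ φ.ker) :=
      Finite.of_equiv _ (QuotientGroup.quotientKerEquivOfSurjective φ hsurj).toEquiv.symm
    haveI : Finite G :=
      Finite.of_equiv _ (Subgroup.groupEquivQuotientProdSubgroup (s := φ.ker)).symm
    set r := n.factorization p with hr
    have hprdvd : p ^ r ∣ n := Nat.ordProj_dvd n p
    haveI : NeZero (p ^ r) := ⟨pow_ne_zero _ pp.pos.ne'⟩
    let c : ZMod n →+* ZMod (p ^ r) := ZMod.castHom hprdvd _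
    let ψ : Multiplicative (ZMod n) →* Multiplicative (ZMod (p ^ r)) :=
      AddMonoidHom.toMultiplicative c.toAddMonoidHom
    have hψs : Function.Surjective ψ := by
      intro x
      obtain ⟨k, hk⟩ := ZMod.natCast_zmod_surjective (n := p ^ r) x.toAdd
      refine ⟨Multiplicative.ofAdd ((k : ZMod n)), ?_⟩
      apply Multiplicative.toAdd.injective
      show c ((k : ZMod n)) = x.toAdd
      rw [map_natCast, hk]
    have hcs : Function.Surjective (ψ.comp φ) := hψs.comp hsurj
    refine ⟨r, ψ.comp φ, hcs, inferInstance, ?_⟩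
    have h1 : Nat.card G = n * Nat.card φ.ker := by
      rw [auxFBPC_card_of_surj φ hsurj, hcm]
    have h2 : Nat.card G = p ^ r * Nat.card (ψ.comp φ).ker := by
      rw [auxFBPC_card_of_surj (ψ.comp φ) hcs, hcm]
    have hmul : p ^ r * Nat.card (ψ.comp φ).ker = p ^ r * ((n / p ^ r) * Nat.card φ.ker) := by
      rw [← h2, h1, ← mul_assoc, Nat.ordProj_mul_ordCompl_eq_self n p]
    have heq : Nat.card (ψ.comp φ).ker = (n / p ^ r) * Nat.card φ.ker :=
      Nat.eq_of_mul_eq_mul_left (pow_pos pp.pos _) hmul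
    rw [heq, pp.dvd_mul]
    push_neg
    exact ⟨Nat.not_dvd_ordCompl pp hn.ne', hcop p hp⟩
  · intro h
    classical
    haveI : Fintype π := hfin.fintype
    choose r φ hsurj hker hnd using fun i : π => h i i.2
    have ppos : ∀ i : π, 0 < (i : ℕ) ^ r i := fun i => pow_pos (hprime i i.2).pos _
    haveI : ∀ i : π, NeZero ((i : ℕ) ^ r i) := fun i => ⟨(ppos i).ne'⟩
    obtain ⟨p0, hp0⟩ := hne
    haveI : Finite (G ⧸ (φ ⟨p0, hp0⟩).ker) := Finite.of_equiv _
      (QuotientGroup.quotientKerEquivOfSurjective _ (hsurj ⟨p0, hp0⟩)).toEquiv.symm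
    haveI := hker ⟨p0, hp0⟩
    haveI : Finite G := Finite.of_equiv _
      (Subgroup.groupEquivQuotientProdSubgroup (s := (φ ⟨p0, hp0⟩).ker)).symm
    have hco : Pairwise (Nat.Coprime on fun i : π => (i : ℕ) ^ r i) := by
      intro i j hij
      show Nat.Coprime ((i : ℕ) ^ r i) ((j : ℕ) ^ r j)
      exact Nat.Coprime.pow _ _
        ((Nat.coprime_primes (hprime i i.2) (hprime j j.2)).mpr (Subtype.coe_injective.ne hij))
    set n := ∏ i : π, (i : ℕ) ^ r i with hn
    have hnpos : 0 < n := Finset.prod_pos (fun i _ => ppos i)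
    haveI : NeZero n := ⟨hnpos.ne'⟩
    let e1 : ZMod n ≃+* ∀ i : π, ZMod ((i : ℕ) ^ r i) := ZMod.prodEquivPi _ hco
    let E : Multiplicative (ZMod n) ≃* ∀ i : π, Multiplicative (ZMod ((i : ℕ) ^ r i)) :=
      (AddEquiv.toMultiplicative e1.toAddEquiv).trans (MulEquiv.piMultiplicative _)
    let Ψ : G →* ∀ i : π, Multiplicative (ZMod ((i : ℕ) ^ r i)) := Pi.monoidHom φ
    have hcard_cod : Nat.card (∀ i : π, Multiplicative (ZMod ((i : ℕ) ^ r i))) = n := by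
      rw [Nat.card_pi, hn]
      exact Finset.prod_congr rfl fun i _ => hcm _
    have hdvdR : ∀ i : π, (i : ℕ) ^ r i ∣ Nat.card Ψ.range := by
      intro i
      let f : Ψ.range →* Multiplicative (ZMod ((i : ℕ) ^ r i)) :=
        (Pi.evalMonoidHom _ i).comp Ψ.range.subtype
      have fs : Function.Surjective f := by
        intro y
        obtain ⟨g, hg⟩ := hsurj i y
        exact ⟨⟨Ψ g, ⟨g, rfl⟩⟩, hg⟩
      have := Subgroup.card_dvd_of_surjective f fs
      rwa [hcm] at this
    have h2 : Nat.card Ψ.range ∣ n := by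
      rw [← hcard_cod]; exact Subgroup.card_subgroup_dvd_card _
    have h3 : n ∣ Nat.card Ψ.range := by
      rw [hn]
      exact auxFBPC_prod_dvd Finset.univ _ _ (fun i _ j _ hij => hco hij) (fun i _ => hdvdR i)
    have hR : Ψ.range = ⊤ :=
      Subgroup.eq_top_of_card_eq _ (by rw [Nat.dvd_antisymm h2 h3, hcard_cod])
    have hΨs : Function.Surjective Ψ := MonoidHom.range_eq_top.mp hR
    refine ⟨n, (E.symm.toMonoidHom.comp Ψ), hnpos, ?_, E.symm.surjective.comp hΨs,
      inferInstance, ?_⟩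
    · intro q hq hqn
      rw [hn] at hqn
      obtain ⟨i, _, hqi⟩ := hq.prime.exists_mem_finset_dvd hqn
      have := (Nat.prime_dvd_prime_iff_eq hq (hprime i i.2)).mp (hq.dvd_of_dvd_pow hqi)
      subst this
      exact i.2
    · intro q hq hdvd
      have hle : (E.symm.toMonoidHom.comp Ψ).ker ≤ (φ ⟨q, hq⟩).ker := by
        intro x hx
        have h1 : E.symm (Ψ x) = 1 := hx
        have h2 : Ψ x = 1 := (MulEquiv.map_eq_one_iff E.symm).mp h1
        exact congrFun h2 ⟨q, hq⟩
      exact hnd ⟨q, hq⟩ (hdvd.trans (Subgroup.card_dvd_of_le hle))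
end

section
/- Let R be a ring and let G be a locally finite group (every finitely generated subgroup of G is finite). Then the group ring RG is left morphic if and only if for every x ∈ RG there exists a finite subgroup H of G such that x lies in the subring RH of RG (the image of the group ring of H under the inclusion-induced embedding RH → RG) and x is left morphic as an element of the ring RH. -/
open Function

universe u v

section MorphicHelpers
open scoped Classical

variable {R : Type*} [Ring R] {G : Type*} [Group G]


variable {R : Type*} [Ring R] {G : Type*} [Group G]

lemma iota_eq (H : Subgroup G) (w : MonoidAlgebra R H) :
    MonoidAlgebra.mapDomainRingHom R H.subtype w = MonoidAlgebra.ofCoeff (Finsupp.mapDomain (⇑H.subtype) w.coeff) := rfl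

lemma iota_apply (H : Subgroup G) (w : MonoidAlgebra R H) (g : G) :
    (MonoidAlgebra.mapDomainRingHom R H.subtype w).coeff g =
      if hg : g ∈ H then w.coeff ⟨g, hg⟩ else 0 := by
  rw [iota_eq, MonoidAlgebra.coeff_ofCoeff]
  split
  · rename_i hg
    exact Finsupp.mapDomain_apply (Subgroup.subtype_injective H) w.coeff ⟨g, hg⟩
  · rename_i hg
    apply Finsupp.mapDomain_notin_range
    rintro ⟨⟨a, ha⟩, rfl⟩
    exact hg ha

lemma iota_inj (H : Subgroup G) :
    Function.Injective (MonoidAlgebra.mapDomainRingHom R H.subtype :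
      MonoidAlgebra R H → MonoidAlgebra R G) := by
  intro a b hab
  rw [iota_eq, iota_eq] at hab
  exact MonoidAlgebra.coeff_injective (Finsupp.mapDomain_injective (Subgroup.subtype_injective H) (MonoidAlgebra.ofCoeff_injective hab))

lemma iota_section (H : Subgroup G) (z : MonoidAlgebra R G)
    (hz : ∀ g ∈ z.coeff.support, g ∈ H) :
    ∃ w : MonoidAlgebra R H, MonoidAlgebra.mapDomainRingHom R H.subtype w = z := by
  refine ⟨MonoidAlgebra.ofCoeff (Finsupp.subtypeDomain (fun g => g ∈ H) z.coeff), ?_⟩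
  ext g
  rw [iota_apply]
  split
  · rfl
  · rename_i hg
    by_contra hne
    exact hg (hz g (Finsupp.mem_support_iff.mpr fun h => hne h.symm))

lemma mem_support_mul {a b : MonoidAlgebra R G} {g : G} (hg : g ∈ (a * b).coeff.support) :
    ∃ x ∈ a.coeff.support, ∃ y ∈ b.coeff.support, x * y = g :=
  Finset.mem_mul.mp (MonoidAlgebra.support_coeff_mul_subset a b hg)

lemma iota_support_mem (H : Subgroup G) {w : MonoidAlgebra R H} {g : G}
    (hg : g ∈ (MonoidAlgebra.mapDomainRingHom R H.subtype w).coeff.support) : g ∈ H := by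
  by_contra hgH
  have := Finsupp.mem_support_iff.mp hg
  rw [iota_apply] at this
  simp [hgH] at this

/-- If `ι u = r * ι y` then `u = w * y` for some `w` in the subring. -/
lemma key2 (H : Subgroup G) (u y : MonoidAlgebra R H) (r : MonoidAlgebra R G)
    (h : MonoidAlgebra.mapDomainRingHom R H.subtype u =
      r * MonoidAlgebra.mapDomainRingHom R H.subtype y) :
    ∃ w : MonoidAlgebra R H, u = w * y := by
  set ι := MonoidAlgebra.mapDomainRingHom R H.subtype with hι
  set r₁ : MonoidAlgebra R G := MonoidAlgebra.ofCoeff (r.coeff.filter (fun g => g ∈ H)) with hr₁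
  set r₂ : MonoidAlgebra R G := MonoidAlgebra.ofCoeff (r.coeff.filter (fun g => ¬ g ∈ H)) with hr₂
  have hsplit : r₁ + r₂ = r := MonoidAlgebra.coeff_injective (Finsupp.filter_pos_add_filter_neg r.coeff _)
  have hr₁H : ∀ g ∈ (r₁ * ι y).coeff.support, g ∈ H := by
    intro g hg
    obtain ⟨x, hx, c, hc, rfl⟩ := mem_support_mul hg
    have hxH : x ∈ H := by
      have := Finsupp.support_filter (p := fun g => g ∈ H) (f := r.coeff) ▸ hx
      exact (Finset.mem_filter.mp this).2
    exact H.mul_mem hxH (iota_support_mem H hc)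
  have hr₂H : ∀ g ∈ (r₂ * ι y).coeff.support, ¬ g ∈ H := by
    intro g hg
    obtain ⟨x, hx, c, hc, rfl⟩ := mem_support_mul hg
    have hxH : ¬ x ∈ H := by
      have := Finsupp.support_filter (p := fun g => ¬ g ∈ H) (f := r.coeff) ▸ hx
      exact (Finset.mem_filter.mp this).2
    intro hmem
    exact hxH (by simpa using H.mul_mem hmem (H.inv_mem (iota_support_mem H hc)))
  have hadd : ι u = r₁ * ι y + r₂ * ι y := by
    rw [h, ← hsplit, add_mul]
  have hr₂0 : r₂ * ι y = 0 := by
    ext g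
    by_cases hg : g ∈ H
    · by_contra hne
      exact hr₂H g (Finsupp.mem_support_iff.mpr fun h' => hne (h' ▸ rfl)) hg
    · have h1 : (r₁ * ι y).coeff g = 0 := by
        by_contra hne
        exact hg (hr₁H g (Finsupp.mem_support_iff.mpr fun h' => hne (h' ▸ rfl)))
      have h2 : (ι u).coeff g = 0 := by
        rw [iota_apply]; simp [hg]
      have h3 : (r₁ * ι y).coeff g + (r₂ * ι y).coeff g = 0 := by
        rw [← Finsupp.add_apply, ← MonoidAlgebra.coeff_add, ← hadd, h2]
      rw [h1, zero_add] at h3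
      simpa using h3
  have : ι u = r₁ * ι y := by rw [hadd, hr₂0, add_zero]
  have hr₁mem : ∀ g ∈ r₁.coeff.support, g ∈ H := by
    intro g hg
    have := Finsupp.support_filter (p := fun g => g ∈ H) (f := r.coeff) ▸ hg
    exact (Finset.mem_filter.mp this).2
  obtain ⟨w, hw⟩ := iota_section H r₁ hr₁mem
  refine ⟨w, iota_inj H ?_⟩
  rw [map_mul, hw, this]

/-- Lifting the morphic annihilator condition from `RH` to `RG`. -/
lemma key (H : Subgroup G) (y b : MonoidAlgebra R H)
    (hyb : ∀ u : MonoidAlgebra R H, u * b = 0 ↔ ∃ s, u = s * y) :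
    ∀ z : MonoidAlgebra R G,
      z * MonoidAlgebra.mapDomainRingHom R H.subtype b = 0 ↔
        ∃ r, z = r * MonoidAlgebra.mapDomainRingHom R H.subtype y := by
  set ι := MonoidAlgebra.mapDomainRingHom R H.subtype with hι
  have hyb0 : y * b = 0 := (hyb y).mpr ⟨1, (one_mul y).symm⟩
  intro z
  constructor
  · intro hz
    suffices H' : ∀ n (z : MonoidAlgebra R G),
        (z.coeff.support.image (QuotientGroup.mk (s := H))).card = n → z * ι b = 0 →
          ∃ r, z = r * ι y from H' _ z rfl hz
    clear hz z
    intro n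
    induction n using Nat.strong_induction_on with
    | _ n IH =>
      intro z hcard hz
      by_cases h0 : z = 0
      · exact ⟨0, by simp [h0]⟩
      obtain ⟨g₀, hg₀⟩ := Finsupp.support_nonempty_iff.mpr (mt MonoidAlgebra.coeff_eq_zero.mp h0)
      set q : G ⧸ H := QuotientGroup.mk g₀ with hq
      set z₁ : MonoidAlgebra R G := MonoidAlgebra.ofCoeff (z.coeff.filter (fun g => QuotientGroup.mk g = q)) with hz₁
      set z₂ : MonoidAlgebra R G := MonoidAlgebra.ofCoeff (z.coeff.filter (fun g => ¬ QuotientGroup.mk g = q)) with hz₂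
      have hsplit : z₁ + z₂ = z := MonoidAlgebra.coeff_injective (Finsupp.filter_pos_add_filter_neg z.coeff _)
      have hmem₁ : ∀ g ∈ z₁.coeff.support, QuotientGroup.mk g = q ∧ g ∈ z.coeff.support := by
        intro g hg
        have := Finsupp.support_filter (p := fun g => QuotientGroup.mk g = q) (f := z.coeff) ▸ hg
        exact ⟨(Finset.mem_filter.mp this).2, (Finset.mem_filter.mp this).1⟩
      have hmem₂ : ∀ g ∈ z₂.coeff.support, ¬ QuotientGroup.mk g = q ∧ g ∈ z.coeff.support := by
        intro g hg
        have := Finsupp.support_filter (p := fun g => ¬ QuotientGroup.mk g = q) (f := z.coeff) ▸ hg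
        exact ⟨(Finset.mem_filter.mp this).2, (Finset.mem_filter.mp this).1⟩
      -- supports of the two product pieces
      have hp₁ : ∀ g ∈ (z₁ * ι b).coeff.support, QuotientGroup.mk g = q := by
        intro g hg
        obtain ⟨x, hx, c, hc, rfl⟩ := mem_support_mul hg
        have hcH : c ∈ H := iota_support_mem H hc
        have : QuotientGroup.mk (s := H) (x * c) = QuotientGroup.mk x := by
          apply (QuotientGroup.eq (s := H)).mpr
          simpa using H.inv_mem hcH
        rw [this, (hmem₁ x hx).1]
      have hp₂ : ∀ g ∈ (z₂ * ι b).coeff.support, ¬ QuotientGroup.mk g = q := by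
        intro g hg
        obtain ⟨x, hx, c, hc, rfl⟩ := mem_support_mul hg
        have hcH : c ∈ H := iota_support_mem H hc
        have heq : QuotientGroup.mk (s := H) (x * c) = QuotientGroup.mk x := by
          apply (QuotientGroup.eq (s := H)).mpr
          simpa using H.inv_mem hcH
        rw [heq]
        exact (hmem₂ x hx).1
      have hadd : z₁ * ι b + z₂ * ι b = 0 := by rw [← add_mul, hsplit, hz]
      have h₁0 : z₁ * ι b = 0 := by
        ext g
        simp only [MonoidAlgebra.coeff_zero, Finsupp.coe_zero, Pi.zero_apply]
        by_cases hgq : QuotientGroup.mk (s := H) g = q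
        · have h2 : (z₂ * ι b).coeff g = 0 := by
            by_contra hne
            exact hp₂ g (Finsupp.mem_support_iff.mpr hne) hgq
          have h3 : (z₁ * ι b).coeff g + (z₂ * ι b).coeff g = 0 := by
            rw [← Finsupp.add_apply, ← MonoidAlgebra.coeff_add, hadd]; rfl
          rwa [h2, add_zero] at h3
        · by_contra hne
          exact hgq (hp₁ g (Finsupp.mem_support_iff.mpr hne))
      have h₂0 : z₂ * ι b = 0 := by
        have := hadd
        rwa [h₁0, zero_add] at this
      -- handle z₁
      have hsupp_u : ∀ g ∈ ((MonoidAlgebra.single g₀⁻¹ (1 : R)) * z₁).coeff.support, g ∈ H := by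
        intro g hg
        obtain ⟨x, hx, c, hc, rfl⟩ := mem_support_mul hg
        have hx' : x = g₀⁻¹ := Finset.mem_singleton.mp (Finsupp.support_single_subset hx)
        have hcq : QuotientGroup.mk (s := H) c = QuotientGroup.mk g₀ := (hmem₁ c hc).1
        have : g₀⁻¹ * c ∈ H := (QuotientGroup.eq (s := H)).mp hcq.symm
        rwa [hx']
      obtain ⟨w, hw⟩ := iota_section H _ hsupp_u
      have hwb : w * b = 0 := by
        apply iota_inj H
        rw [map_mul, hw, map_zero, mul_assoc, h₁0, mul_zero]
      obtain ⟨s, hs⟩ := (hyb w).mp hwb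
      have hz₁eq : z₁ = MonoidAlgebra.single g₀ (1 : R) * ι w := by
        rw [hw, ← mul_assoc, MonoidAlgebra.single_mul_single, mul_inv_cancel, mul_one,
          ← MonoidAlgebra.one_def, one_mul]
      -- handle z₂ by induction
      have hcard₂ : (z₂.coeff.support.image (QuotientGroup.mk (s := H))).card < n := by
        have hqmem : q ∈ z.coeff.support.image (QuotientGroup.mk (s := H)) :=
          Finset.mem_image.mpr ⟨g₀, hg₀, rfl⟩
        have hsub : z₂.coeff.support.image (QuotientGroup.mk (s := H)) ⊆
            (z.coeff.support.image (QuotientGroup.mk (s := H))).erase q := by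
          intro p hp
          obtain ⟨g, hg, rfl⟩ := Finset.mem_image.mp hp
          exact Finset.mem_erase.mpr ⟨(hmem₂ g hg).1,
            Finset.mem_image.mpr ⟨g, (hmem₂ g hg).2, rfl⟩⟩
        calc (z₂.coeff.support.image (QuotientGroup.mk (s := H))).card
            ≤ ((z.coeff.support.image (QuotientGroup.mk (s := H))).erase q).card :=
              Finset.card_le_card hsub
          _ < (z.coeff.support.image (QuotientGroup.mk (s := H))).card :=
              Finset.card_erase_lt_of_mem hqmem
          _ = n := hcard
      obtain ⟨r₂, hr₂⟩ := IH _ hcard₂ z₂ rfl h₂0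
      refine ⟨MonoidAlgebra.single g₀ (1 : R) * ι s + r₂, ?_⟩
      rw [add_mul, ← hr₂, ← hsplit]
      congr 1
      rw [hz₁eq, hs, map_mul, mul_assoc]
  · rintro ⟨r, rfl⟩
    rw [mul_assoc, ← map_mul, hyb0, map_zero, mul_zero]

end MorphicHelpers

/-- For `G` locally finite, the group ring `RG` is left morphic iff every
element of `RG` lies in the image of `RH → RG` for some finite subgroup
`H ≤ G` and is left morphic as an element of `RH`. -/

theorem locallyFinite_groupRing_leftMorphic_iff (R : Type*) [Ring R]
    (G : Type*) [Group G] (hG : ∀ H : Subgroup G, H.FG → Finite H) :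
    IsLeftMorphicRing (MonoidAlgebra R G) ↔
      ∀ x : MonoidAlgebra R G, ∃ H : Subgroup G, Finite H ∧
        ∃ y : MonoidAlgebra R H,
          MonoidAlgebra.mapDomainRingHom R H.subtype y = x ∧ IsLeftMorphicElem y := by
  classical
  constructor
  · intro hm x
    obtain ⟨b, hb1, hb2⟩ := hm x
    set S : Finset G := x.coeff.support ∪ b.coeff.support with hS
    set K : Subgroup G := Subgroup.closure (S : Set G) with hK
    have hfin : Finite K := hG K ⟨S, rfl⟩
    have hxs : ∀ g ∈ x.coeff.support, g ∈ K := by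
      intro g hg
      apply Subgroup.subset_closure
      simp only [hS, Finset.coe_union, Set.mem_union, Finset.mem_coe]
      exact Or.inl hg
    have hbs : ∀ g ∈ b.coeff.support, g ∈ K := by
      intro g hg
      apply Subgroup.subset_closure
      simp only [hS, Finset.coe_union, Set.mem_union, Finset.mem_coe]
      exact Or.inr hg
    obtain ⟨y, hy⟩ := iota_section K x hxs
    obtain ⟨c, hc⟩ := iota_section K b hbs
    have hxb : x * b = 0 := (hb1 x).mpr ⟨1, (one_mul x).symm⟩
    have hbx : b * x = 0 := (hb2 b).mpr ⟨1, (one_mul b).symm⟩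
    have hyc : y * c = 0 := iota_inj K (by rw [map_mul, hy, hc, map_zero, hxb])
    have hcy : c * y = 0 := iota_inj K (by rw [map_mul, hy, hc, map_zero, hbx])
    refine ⟨K, hfin, y, hy, c, fun u => ⟨fun huc => ?_, ?_⟩, fun u => ⟨fun huy => ?_, ?_⟩⟩
    · have h1 : MonoidAlgebra.mapDomainRingHom R K.subtype u * b = 0 := by
        rw [← hc, ← map_mul, huc, map_zero]
      obtain ⟨r, hr⟩ := (hb1 _).mp h1
      exact key2 K u y r (by rw [hr, hy])
    · rintro ⟨s, rfl⟩
      rw [mul_assoc, hyc, mul_zero]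
    · have h1 : MonoidAlgebra.mapDomainRingHom R K.subtype u * x = 0 := by
        rw [← hy, ← map_mul, huy, map_zero]
      obtain ⟨r, hr⟩ := (hb2 _).mp h1
      exact key2 K u c r (by rw [hr, hc])
    · rintro ⟨s, rfl⟩
      rw [mul_assoc, hcy, mul_zero]
  · intro h a
    obtain ⟨K, hfin, y, hy, c, h1, h2⟩ := h a
    subst hy
    exact ⟨MonoidAlgebra.mapDomainRingHom R K.subtype c,
      fun z => key K y c h1 z, fun z => key K c y h2 z⟩
end
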